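/- arXiv:2104.13106 — 9 statements merged into one kernel-verified Lean document; each statement's English description precedes it below -/
import Mathlib

section
/- If π is a trim optimal plan between discrete measures μ and ν, and π = π⁽¹⁾ + π⁽²⁾ where π⁽¹⁾, π⁽²⁾ are nonnegative with disjoint supports, then π⁽¹⁾ and π⁽²⁾ are each trim optimal plans between their own marginals. -/
open Finset

/-- A transportation plan between discrete measures `μ` and `ν`. -/
def IsPlan {X : Type*} [Fintype X] (μ ν : X → ℝ) (π : X → X → ℝ) : Prop :=
  (∀ x y, 0 ≤ π x y) ∧ (∀ x, ∑ y, π x y = μ x) ∧ (∀ y, ∑ x, π x y = ν y)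

/-- Total transport cost of a plan. -/
noncomputable def tcost {X : Type*} [Fintype X] (c π : X → X → ℝ) : ℝ :=
  ∑ x, ∑ y, c x y * π x y

open Classical in
/-- Support of a plan, as a finite set of pairs. -/
noncomputable def spt {X : Type*} [Fintype X] (π : X → X → ℝ) : Finset (X × X) :=
  Finset.univ.filter (fun p => π p.1 p.2 ≠ 0)

open Classical in
/-- Support of a discrete measure. -/
noncomputable def msupp {X : Type*} [Fintype X] (μ : X → ℝ) : Finset X :=
  Finset.univ.filter (fun x => μ x ≠ 0)

/-- An optimal transportation plan. -/
def IsOptimal {X : Type*} [Fintype X] (c : X → X → ℝ) (μ ν : X → ℝ) (π : X → X → ℝ) : Prop :=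
  IsPlan μ ν π ∧ ∀ π' : X → X → ℝ, IsPlan μ ν π' → tcost c π ≤ tcost c π'

/-- A trim plan: optimal with support of minimal cardinality among optimal plans. -/
def IsTrim {X : Type*} [Fintype X] (c : X → X → ℝ) (μ ν : X → ℝ) (π : X → X → ℝ) : Prop :=
  IsOptimal c μ ν π ∧
    ∀ π' : X → X → ℝ, IsOptimal c μ ν π' → (spt π).card ≤ (spt π').card

/-- `L^∞` norm of the cost with respect to a plan: max of `c` on the support. -/
noncomputable def linf {X : Type*} [Fintype X] (c π : X → X → ℝ) : ℝ :=
  WithBot.unbotD 0 (((spt π).image (fun p => c p.1 p.2)).max)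

/-- Optimal transport cost `W_c(μ,ν)`. -/
noncomputable def Wc {X : Type*} [Fintype X] (c : X → X → ℝ) (μ ν : X → ℝ) : ℝ :=
  sInf {r | ∃ π, IsPlan μ ν π ∧ tcost c π = r}

/-- Infinity-Wasserstein cost `W_c^{(∞)}(μ,ν)`. -/
noncomputable def Winf {X : Type*} [Fintype X] (c : X → X → ℝ) (μ ν : X → ℝ) : ℝ :=
  sInf {r | ∃ π, IsPlan μ ν π ∧ linf c π = r}

/-- The deterministic plan `(Id, h)_# σ`. -/
def pushF {X : Type*} [DecidableEq X] (h : X → X) (σ : X → ℝ) : X → X → ℝ :=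
  fun x y => if h x = y then σ x else 0

/-- The deterministic plan `(h, Id)_# σ`. -/
def pushB {X : Type*} [DecidableEq X] (h : X → X) (σ : X → ℝ) : X → X → ℝ :=
  fun x y => if h y = x then σ y else 0

lemma tcost_add' {X : Type*} [Fintype X] (c a b : X → X → ℝ) :
    tcost c (fun x y => a x y + b x y) = tcost c a + tcost c b := by
  simp [tcost, mul_add, Finset.sum_add_distrib]

lemma trim_summand {X : Type*} [Fintype X]
    (μ ν : X → ℝ) (c : X → X → ℝ) (π π₁ π₂ : X → X → ℝ)
    (htrim : IsTrim c μ ν π)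
    (h1 : ∀ x y, 0 ≤ π₁ x y) (h2 : ∀ x y, 0 ≤ π₂ x y)
    (hsum : ∀ x y, π x y = π₁ x y + π₂ x y)
    (hdisj : Disjoint (spt π₁) (spt π₂)) :
    IsTrim c (fun x => ∑ y, π₁ x y) (fun y => ∑ x, π₁ x y) π₁ := by
  classical
  obtain ⟨⟨⟨hπnn, hπμ, hπν⟩, hopt⟩, hmin⟩ := htrim
  have hplan1 : IsPlan (fun x => ∑ y, π₁ x y) (fun y => ∑ x, π₁ x y) π₁ :=
    ⟨h1, fun _ => rfl, fun _ => rfl⟩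
  have hcomb : ∀ π₁' : X → X → ℝ,
      IsPlan (fun x => ∑ y, π₁ x y) (fun y => ∑ x, π₁ x y) π₁' →
      IsPlan μ ν (fun x y => π₁' x y + π₂ x y) := by
    rintro π₁' ⟨hnn, hm1, hm2⟩
    refine ⟨fun x y => add_nonneg (hnn x y) (h2 x y), fun x => ?_, fun y => ?_⟩
    · rw [Finset.sum_add_distrib, hm1 x, ← hπμ x]
      simp [hsum, Finset.sum_add_distrib]
    · rw [Finset.sum_add_distrib, hm2 y, ← hπν y]
      simp [hsum, Finset.sum_add_distrib]
  have hπcost : tcost c π = tcost c π₁ + tcost c π₂ := by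
    rw [← tcost_add']; simp [tcost, hsum]
  have hopt1 : IsOptimal c (fun x => ∑ y, π₁ x y) (fun y => ∑ x, π₁ x y) π₁ := by
    refine ⟨hplan1, fun π₁' h' => ?_⟩
    have := hopt _ (hcomb π₁' h')
    rw [hπcost, tcost_add'] at this
    linarith
  refine ⟨hopt1, fun π₁' h' => ?_⟩
  obtain ⟨h'plan, h'opt⟩ := h'
  have hc' : IsPlan μ ν (fun x y => π₁' x y + π₂ x y) := hcomb π₁' h'plan
  have hcostle : tcost c (fun x y => π₁' x y + π₂ x y) ≤ tcost c π := by
    rw [tcost_add', hπcost]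
    have := h'opt π₁ hplan1
    linarith
  have hcopt : IsOptimal c μ ν (fun x y => π₁' x y + π₂ x y) :=
    ⟨hc', fun p hp => le_trans hcostle (hopt p hp)⟩
  have hcard := hmin _ hcopt
  have hsptπ : spt π = spt π₁ ∪ spt π₂ := by
    ext p
    simp only [spt, Finset.mem_filter, Finset.mem_univ, true_and, Finset.mem_union, hsum]
    constructor
    · intro h; by_contra hh; push_neg at hh
      exact h (by rw [hh.1, hh.2, add_zero])
    · rintro (h | h) hh
      · exact h (by linarith [h1 p.1 p.2, h2 p.1 p.2])
      · exact h (by linarith [h1 p.1 p.2, h2 p.1 p.2])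
  have hsub : spt (fun x y => π₁' x y + π₂ x y) ⊆ spt π₁' ∪ spt π₂ := by
    intro p hp
    simp only [spt, Finset.mem_filter, Finset.mem_univ, true_and, Finset.mem_union] at hp ⊢
    by_contra hh; push_neg at hh
    exact hp (by rw [hh.1, hh.2, add_zero])
  have e1 : (spt π).card = (spt π₁).card + (spt π₂).card := by
    rw [hsptπ, Finset.card_union_of_disjoint hdisj]
  have e2 : (spt (fun x y => π₁' x y + π₂ x y)).card ≤ (spt π₁').card + (spt π₂).card :=
    le_trans (Finset.card_le_card hsub) (Finset.card_union_le _ _)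
  omega

/-- if a trim plan splits as a sum of two nonnegative plans with
disjoint supports, each summand is trim between its own marginals. -/
theorem trim_of_disjoint_split {X : Type*} [Fintype X]
    (μ ν : X → ℝ) (c : X → X → ℝ) (π π₁ π₂ : X → X → ℝ)
    (hc : ∀ x y, 0 ≤ c x y)
    (hμν : ∑ x, μ x = ∑ y, ν y)
    (htrim : IsTrim c μ ν π)
    (h1 : ∀ x y, 0 ≤ π₁ x y) (h2 : ∀ x y, 0 ≤ π₂ x y)
    (hsum : ∀ x y, π x y = π₁ x y + π₂ x y)
    (hdisj : Disjoint (spt π₁) (spt π₂)) :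
    IsTrim c (fun x => ∑ y, π₁ x y) (fun y => ∑ x, π₁ x y) π₁ ∧
      IsTrim c (fun x => ∑ y, π₂ x y) (fun y => ∑ x, π₂ x y) π₂ := by
  refine ⟨trim_summand μ ν c π π₁ π₂ htrim h1 h2 hsum hdisj,
    trim_summand μ ν c π π₂ π₁ htrim h2 h1 (fun x y => by rw [hsum]; ring) hdisj.symm⟩
end

section
/- Any restriction of an optimal transportation plan between discrete measures is optimal between its own marginals. -/
open Finset

/-- any restriction of an optimal plan is optimal between its marginals. -/
theorem restriction_optimal {X : Type*} [Fintype X]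
    (μ ν : X → ℝ) (c : X → X → ℝ) (π πr : X → X → ℝ)
    (hc : ∀ x y, 0 ≤ c x y)
    (hμν : ∑ x, μ x = ∑ y, ν y)
    (hopt : IsOptimal c μ ν π)
    (hr0 : ∀ x y, 0 ≤ πr x y) (hrπ : ∀ x y, πr x y ≤ π x y) :
    IsOptimal c (fun x => ∑ y, πr x y) (fun y => ∑ x, πr x y) πr := by
  obtain ⟨⟨h0, hμ, hν⟩, hmin⟩ := hopt
  refine ⟨⟨hr0, fun x => rfl, fun y => rfl⟩, ?_⟩
  intro π' ⟨h0', hμ', hν'⟩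
  have key := hmin (fun x y => π x y - πr x y + π' x y) ?_
  · have : tcost c (fun x y => π x y - πr x y + π' x y)
        = tcost c π - tcost c πr + tcost c π' := by
      simp only [tcost, ← Finset.sum_sub_distrib, ← Finset.sum_add_distrib]
      congr 1; ext x; congr 1; ext y; ring
    linarith
  · refine ⟨fun x y => by have := hrπ x y; have := h0' x y; show 0 ≤ π x y - πr x y + π' x y; linarith, fun x => ?_, fun y => ?_⟩
    · simp only [Finset.sum_add_distrib, Finset.sum_sub_distrib, hμ x, hμ' x]; ring
    · simp only [Finset.sum_add_distrib, Finset.sum_sub_distrib, hν y, hν' y]; ring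
end

section
/- Let μ and ν be positive measures on a finite set X with equal total mass and all atoms positive, c : X × X → ℝ a cost function, and π a trim optimal plan. Then there exist decompositions μ = μ⁽ᵈ⁾ + μ⁽ᶜ⁾ and ν = ν⁽ᵈ⁾ + ν⁽ᶜ⁾ into nonnegative measures, and functions h⁽¹⁾, h⁽²⁾ : X → X, such that π = (Id, h⁽¹⁾)_#μ⁽ᵈ⁾ + (h⁽²⁾, Id)_#ν⁽ᵈ⁾, i.e., every trim plan is the sum of two deterministic plans. -/
open Finset

set_option linter.unusedSectionVars false

section Helpers
variable {X : Type*} [Fintype X] [DecidableEq X]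

theorem decomposeAux {X : Type*} [DecidableEq X] (S : Finset (X × X))
    (hP : ∀ S' ⊆ S, S'.Nonempty → S'.card < (S'.image Prod.fst).card + (S'.image Prod.snd).card) :
    ∃ F B : Finset (X × X), F ∪ B = S ∧ Disjoint F B ∧
      (∀ p ∈ F, ∀ q ∈ F, p.1 = q.1 → p = q) ∧ (∀ p ∈ B, ∀ q ∈ B, p.2 = q.2 → p = q) := by
  induction S using Finset.strongInduction with
  | _ S ih =>
    rcases S.eq_empty_or_nonempty with rfl | hne
    · exact ⟨∅, ∅, by simp⟩
    have hleaf : ∃ p₀ ∈ S, (∀ q ∈ S, q.1 = p₀.1 → q = p₀) ∨ (∀ q ∈ S, q.2 = p₀.2 → q = p₀) := by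
      by_contra hcon
      push_neg at hcon
      have hA : ∀ a ∈ S.image Prod.fst, 2 ≤ (S.filter (fun q => q.1 = a)).card := by
        intro a ha
        obtain ⟨p, hp, hpa⟩ := Finset.mem_image.1 ha
        obtain ⟨⟨q, hq, hq1, hqne⟩, _⟩ := hcon p hp
        exact Finset.one_lt_card.2 ⟨p, Finset.mem_filter.2 ⟨hp, hpa⟩, q,
          Finset.mem_filter.2 ⟨hq, by rw [hq1, hpa]⟩, fun h => hqne h.symm⟩
      have hB : ∀ b ∈ S.image Prod.snd, 2 ≤ (S.filter (fun q => q.2 = b)).card := by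
        intro b hb
        obtain ⟨p, hp, hpb⟩ := Finset.mem_image.1 hb
        obtain ⟨_, ⟨q, hq, hq2, hqne⟩⟩ := hcon p hp
        exact Finset.one_lt_card.2 ⟨p, Finset.mem_filter.2 ⟨hp, hpb⟩, q,
          Finset.mem_filter.2 ⟨hq, by rw [hq2, hpb]⟩, fun h => hqne h.symm⟩
      have cA : S.card = ∑ a ∈ S.image Prod.fst, (S.filter (fun q => q.1 = a)).card :=
        Finset.card_eq_sum_card_fiberwise (fun x hx => Finset.mem_image_of_mem _ hx)
      have cB : S.card = ∑ b ∈ S.image Prod.snd, (S.filter (fun q => q.2 = b)).card :=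
        Finset.card_eq_sum_card_fiberwise (fun x hx => Finset.mem_image_of_mem _ hx)
      have h1 : 2 * (S.image Prod.fst).card ≤ S.card := by
        rw [cA, two_mul]
        calc (S.image Prod.fst).card + (S.image Prod.fst).card
            = ∑ _a ∈ S.image Prod.fst, 2 := by rw [Finset.sum_const]; ring
          _ ≤ _ := Finset.sum_le_sum hA
      have h2 : 2 * (S.image Prod.snd).card ≤ S.card := by
        rw [cB, two_mul]
        calc (S.image Prod.snd).card + (S.image Prod.snd).card
            = ∑ _b ∈ S.image Prod.snd, 2 := by rw [Finset.sum_const]; ring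
          _ ≤ _ := Finset.sum_le_sum hB
      have := hP S le_rfl hne
      omega
    obtain ⟨p₀, hp₀, hcase⟩ := hleaf
    have hss : S.erase p₀ ⊂ S := Finset.erase_ssubset hp₀
    have hP' : ∀ S' ⊆ S.erase p₀, S'.Nonempty →
        S'.card < (S'.image Prod.fst).card + (S'.image Prod.snd).card :=
      fun S' hS' h => hP S' (hS'.trans (Finset.erase_subset _ _)) h
    obtain ⟨F, B, hUB, hDis, hF, hB⟩ := ih _ hss hP'
    rcases hcase with h1 | h2
    · refine ⟨insert p₀ F, B, ?_, ?_, ?_, hB⟩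
      · rw [Finset.insert_union, hUB, Finset.insert_erase hp₀]
      · rw [Finset.disjoint_insert_left]
        refine ⟨fun hc => ?_, hDis⟩
        have : p₀ ∈ S.erase p₀ := hUB ▸ Finset.mem_union_right F hc
        exact (Finset.ne_of_mem_erase this) rfl
      · intro p hp q hq hpq
        rcases Finset.mem_insert.1 hp with hpe | hp' <;>
          rcases Finset.mem_insert.1 hq with hqe | hq'
        · rw [hpe, hqe]
        · have hqS : q ∈ S.erase p₀ := hUB ▸ Finset.mem_union_left B hq'
          exact absurd (h1 q (Finset.mem_of_mem_erase hqS) (by rw [← hpq, hpe]))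
            (Finset.ne_of_mem_erase hqS)
        · have hpS : p ∈ S.erase p₀ := hUB ▸ Finset.mem_union_left B hp'
          exact absurd (h1 p (Finset.mem_of_mem_erase hpS) (by rw [hpq, hqe]))
            (Finset.ne_of_mem_erase hpS)
        · exact hF p hp' q hq' hpq
    · refine ⟨F, insert p₀ B, ?_, ?_, hF, ?_⟩
      · rw [Finset.union_insert, hUB, Finset.insert_erase hp₀]
      · rw [Finset.disjoint_insert_right]
        refine ⟨fun hc => ?_, hDis⟩
        have : p₀ ∈ S.erase p₀ := hUB ▸ Finset.mem_union_left B hc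
        exact (Finset.ne_of_mem_erase this) rfl
      · intro p hp q hq hpq
        rcases Finset.mem_insert.1 hp with hpe | hp' <;>
          rcases Finset.mem_insert.1 hq with hqe | hq'
        · rw [hpe, hqe]
        · have hqS : q ∈ S.erase p₀ := hUB ▸ Finset.mem_union_right F hq'
          exact absurd (h2 q (Finset.mem_of_mem_erase hqS) (by rw [← hpq, hpe]))
            (Finset.ne_of_mem_erase hqS)
        · have hpS : p ∈ S.erase p₀ := hUB ▸ Finset.mem_union_right F hp'
          exact absurd (h2 p (Finset.mem_of_mem_erase hpS) (by rw [hpq, hqe]))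
            (Finset.ne_of_mem_erase hpS)
        · exact hB p hp' q hq' hpq

theorem perturbAux {X : Type*} [Fintype X] (μ ν : X → ℝ) (c π : X → X → ℝ)
    (htrim : IsTrim c μ ν π) (η : X → X → ℝ)
    (hsupp : ∀ x y, η x y ≠ 0 → π x y ≠ 0)
    (hrow : ∀ x, ∑ y, η x y = 0) (hcol : ∀ y, ∑ x, η x y = 0)
    (hηne : ∃ x y, η x y ≠ 0) : False := by
  classical
  obtain ⟨⟨hplan, hopt⟩, hmincard⟩ := htrim
  obtain ⟨hnn, hrowμ, hcolν⟩ := hplan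
  set N : Finset (X × X) := Finset.univ.filter (fun p => η p.1 p.2 ≠ 0) with hN
  have hNne : N.Nonempty := by
    obtain ⟨x, y, hxy⟩ := hηne
    exact ⟨(x, y), Finset.mem_filter.2 ⟨Finset.mem_univ _, hxy⟩⟩
  obtain ⟨ps, hpsN, hmin⟩ :=
    Finset.exists_min_image N (fun p => π p.1 p.2 / |η p.1 p.2|) hNne
  have hηps : η ps.1 ps.2 ≠ 0 := (Finset.mem_filter.1 hpsN).2
  have hπps : 0 < π ps.1 ps.2 :=
    lt_of_le_of_ne (hnn _ _) (Ne.symm (hsupp _ _ hηps))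
  set δ : ℝ := π ps.1 ps.2 / |η ps.1 ps.2| with hδ
  have hδpos : 0 < δ := div_pos hπps (abs_pos.2 hηps)
  -- feasibility of perturbations
  have hfeas : ∀ t : ℝ, |t| ≤ δ → IsPlan μ ν (fun x y => π x y + t * η x y) := by
    intro t ht
    refine ⟨fun x y => ?_, fun x => ?_, fun y => ?_⟩
    · by_cases hη : η x y = 0
      · simp [hη, hnn x y]
      · have hmem : (x, y) ∈ N := Finset.mem_filter.2 ⟨Finset.mem_univ _, hη⟩
        have hδle : δ ≤ π x y / |η x y| := hmin _ hmem
        have habspos : 0 < |η x y| := abs_pos.2 hη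
        have h1 : δ * |η x y| ≤ π x y := (le_div_iff₀ habspos).1 hδle
        have h2 : |t * η x y| ≤ π x y := by
          rw [abs_mul]
          calc |t| * |η x y| ≤ δ * |η x y| :=
                mul_le_mul_of_nonneg_right ht (abs_nonneg _)
            _ ≤ π x y := h1
        have := neg_abs_le (t * η x y)
        show 0 ≤ π x y + t * η x y
        linarith
    · rw [Finset.sum_add_distrib, hrowμ x, ← Finset.mul_sum, hrow x]; ring
    · rw [Finset.sum_add_distrib, hcolν y, ← Finset.mul_sum, hcol y]; ring
  set D : ℝ := ∑ x, ∑ y, c x y * η x y with hD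
  have hcost : ∀ t : ℝ,
      tcost c (fun x y => π x y + t * η x y) = tcost c π + t * D := by
    intro t
    have key : ∀ x y : X, c x y * (π x y + t * η x y)
        = c x y * π x y + t * (c x y * η x y) := by intro x y; ring
    simp only [tcost, key, Finset.sum_add_distrib, ← Finset.mul_sum, hD]
  have hD0 : D = 0 := by
    have h1 := hopt _ (hfeas δ (by rw [abs_of_pos hδpos]))
    have h2 := hopt _ (hfeas (-δ) (by rw [abs_neg, abs_of_pos hδpos]))
    rw [hcost] at h1 h2
    nlinarith
  set t : ℝ := if η ps.1 ps.2 < 0 then δ else -δ with htdef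
  have htabs : |t| = δ := by
    rw [htdef]; split
    · exact abs_of_pos hδpos
    · rw [abs_neg]; exact abs_of_pos hδpos
  set π' : X → X → ℝ := fun x y => π x y + t * η x y with hπ'
  have hplan' : IsPlan μ ν π' := hfeas t (le_of_eq htabs)
  have hcost' : tcost c π' = tcost c π := by rw [hπ', hcost, hD0]; ring
  have hopt' : IsOptimal c μ ν π' :=
    ⟨hplan', fun π'' h'' => hcost' ▸ hopt π'' h''⟩
  have hzero : π' ps.1 ps.2 = 0 := by
    have hteq : t * η ps.1 ps.2 = -(δ * |η ps.1 ps.2|) := by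
      rw [htdef]
      rcases lt_or_gt_of_ne hηps with hlt | hgt
      · rw [if_pos hlt, abs_of_neg hlt]; ring
      · rw [if_neg (not_lt.2 hgt.le), abs_of_pos hgt]; ring
    show π ps.1 ps.2 + t * η ps.1 ps.2 = 0
    rw [hteq, hδ, div_mul_cancel₀ _ (abs_ne_zero.2 hηps)]
    ring
  have hsub : spt π' ⊆ spt π := by
    intro q hq
    simp only [spt, Finset.mem_filter, Finset.mem_univ, true_and] at hq ⊢
    by_contra hπq'
    have hπq : π q.1 q.2 = 0 := hπq'
    have hηq : η q.1 q.2 = 0 := by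
      by_contra h; exact hsupp _ _ h hπq
    exact hq (by show π q.1 q.2 + t * η q.1 q.2 = 0; rw [hπq, hηq]; ring)
  have hpsIn : ps ∈ spt π := by
    simp only [spt, Finset.mem_filter, Finset.mem_univ, true_and]
    exact ne_of_gt hπps
  have hpsOut : ps ∉ spt π' := by
    simp only [spt, Finset.mem_filter, Finset.mem_univ, true_and]
    exact fun h => h hzero
  have hcard : (spt π').card < (spt π).card :=
    Finset.card_lt_card ⟨hsub, fun h => hpsOut (h hpsIn)⟩
  exact absurd (hmincard π' hopt') (by omega)

theorem noExcess {X : Type*} [Fintype X] [DecidableEq X] (μ ν : X → ℝ) (c π : X → X → ℝ)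
    (htrim : IsTrim c μ ν π) :
    ∀ S' ⊆ spt π, S'.Nonempty →
      S'.card < (S'.image Prod.fst).card + (S'.image Prod.snd).card := by
  classical
  intro S' hsub hne
  by_contra hcon
  push_neg at hcon
  set A : Finset X := S'.image Prod.fst with hA
  set B : Finset X := S'.image Prod.snd with hB
  have hAne : A.Nonempty := hne.image _
  have hBne : B.Nonempty := hne.image _
  obtain ⟨a₀, ha₀⟩ := hAne
  -- the marginal map
  set T : (↥S' → ℝ) →ₗ[ℝ] ((↥(A.erase a₀) → ℝ) × (↥B → ℝ)) :=
    { toFun := fun e =>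
        (fun a => ∑ p : ↥S', if (p : X × X).1 = ↑a then e p else 0,
         fun b => ∑ p : ↥S', if (p : X × X).2 = ↑b then e p else 0)
      map_add' := by
        intro e1 e2
        refine Prod.ext ?_ ?_ <;> funext z <;>
          simp only [Prod.fst_add, Prod.snd_add, Pi.add_apply] <;>
          rw [← Finset.sum_add_distrib] <;>
          exact Finset.sum_congr rfl (fun p _ => by split <;> simp)
      map_smul' := by
        intro r e
        refine Prod.ext ?_ ?_ <;> funext z <;>
          simp only [Prod.smul_fst, Prod.smul_snd, Pi.smul_apply, smul_eq_mul,
            RingHom.id_apply] <;>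
          rw [Finset.mul_sum] <;>
          exact Finset.sum_congr rfl (fun p _ => by split <;> simp) } with hT
  have hnotinj : ¬ Function.Injective T := by
    intro hinj
    have hle := LinearMap.finrank_le_finrank_of_injective hinj
    rw [Module.finrank_pi, Module.finrank_prod, Module.finrank_pi, Module.finrank_pi,
      Fintype.card_coe, Fintype.card_coe, Fintype.card_coe,
      Finset.card_erase_of_mem ha₀] at hle
    have hA1 : 1 ≤ A.card := Finset.card_pos.2 ⟨a₀, ha₀⟩
    omega
  obtain ⟨e1, e2, heq, hne12⟩ := Function.not_injective_iff.1 hnotinj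
  set e : ↥S' → ℝ := e1 - e2 with he
  have hTe : T e = 0 := by rw [he, map_sub, heq, sub_self]
  have hene : e ≠ 0 := sub_ne_zero.2 hne12
  -- row/column fiber sums
  have hrowA : ∀ a : ↥(A.erase a₀), ∑ p : ↥S', (if (p : X × X).1 = ↑a then e p else 0) = 0 :=
    fun a => congrFun (congrArg Prod.fst hTe) a
  have hcolB : ∀ b : ↥B, ∑ p : ↥S', (if (p : X × X).2 = ↑b then e p else 0) = 0 :=
    fun b => congrFun (congrArg Prod.snd hTe) b
  set η : X → X → ℝ := fun x y => ∑ p : ↥S', if (p : X × X) = (x, y) then e p else 0 with hη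
  have hrowfib : ∀ x, ∑ y, η x y = ∑ p : ↥S', (if (p : X × X).1 = x then e p else 0) := by
    intro x
    rw [hη]
    simp only []
    rw [Finset.sum_comm]
    refine Finset.sum_congr rfl (fun p _ => ?_)
    obtain ⟨⟨px, py⟩, hp⟩ := p
    simp only [Prod.mk.injEq]
    by_cases hpx : px = x
    · subst hpx; simp
    · simp [hpx]
  have hcolfib : ∀ y, ∑ x, η x y = ∑ p : ↥S', (if (p : X × X).2 = y then e p else 0) := by
    intro y
    rw [hη]
    simp only []
    rw [Finset.sum_comm]
    refine Finset.sum_congr rfl (fun p _ => ?_)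
    obtain ⟨⟨px, py⟩, hp⟩ := p
    simp only [Prod.mk.injEq]
    by_cases hpy : py = y
    · subst hpy; simp
    · simp [hpy]
  have hcolzero : ∀ y, ∑ x, η x y = 0 := by
    intro y
    rw [hcolfib]
    by_cases hy : y ∈ B
    · exact hcolB ⟨y, hy⟩
    · refine Finset.sum_eq_zero (fun p _ => ?_)
      rw [if_neg]
      intro hc
      exact hy (hc ▸ Finset.mem_image_of_mem Prod.snd p.2)
  have hsumtot : ∑ p : ↥S', e p = 0 := by
    have h1 : ∑ y, ∑ x, η x y = 0 := Finset.sum_eq_zero (fun y _ => hcolzero y)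
    have h2 : ∑ y, ∑ x, η x y = ∑ p : ↥S', e p := by
      calc ∑ y, ∑ x, η x y
          = ∑ y, ∑ p : ↥S', (if (p : X × X).2 = y then e p else 0) :=
            Finset.sum_congr rfl (fun y _ => hcolfib y)
        _ = ∑ p : ↥S', ∑ y, (if (p : X × X).2 = y then e p else 0) := Finset.sum_comm
        _ = ∑ p : ↥S', e p := Finset.sum_congr rfl (fun p _ => by simp)
    rw [← h2, h1]
  have hrowzero : ∀ x, ∑ y, η x y = 0 := by
    have haux : ∀ x, x ≠ a₀ → ∑ y, η x y = 0 := by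
      intro x hx
      rw [hrowfib]
      by_cases hxA : x ∈ A
      · exact hrowA ⟨x, Finset.mem_erase.2 ⟨hx, hxA⟩⟩
      · refine Finset.sum_eq_zero (fun p _ => ?_)
        rw [if_neg]
        intro hc
        exact hxA (hc ▸ Finset.mem_image_of_mem Prod.fst p.2)
    intro x
    by_cases hx : x = a₀
    · rw [hx]
      have h1 : ∑ x, ∑ y, η x y = ∑ y, η a₀ y :=
        Finset.sum_eq_single_of_mem a₀ (Finset.mem_univ _)
          (fun x _ hxne => haux x hxne)
      have h2 : ∑ x, ∑ y, η x y = ∑ p : ↥S', e p := by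
        calc ∑ x, ∑ y, η x y
            = ∑ x, ∑ p : ↥S', (if (p : X × X).1 = x then e p else 0) :=
              Finset.sum_congr rfl (fun x _ => hrowfib x)
          _ = ∑ p : ↥S', ∑ x, (if (p : X × X).1 = x then e p else 0) := Finset.sum_comm
          _ = ∑ p : ↥S', e p := Finset.sum_congr rfl (fun p _ => by simp)
      rw [← h1, h2, hsumtot]
    · exact haux x hx
  have hsupp : ∀ x y, η x y ≠ 0 → π x y ≠ 0 := by
    intro x y hxy
    have hmem : (x, y) ∈ S' := by
      by_contra hnm
      refine hxy (Finset.sum_eq_zero (fun p _ => ?_))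
      rw [if_neg]
      intro hc
      exact hnm (hc ▸ p.2)
    have := hsub hmem
    simp only [spt, Finset.mem_filter] at this
    exact this.2
  have hηne : ∃ x y, η x y ≠ 0 := by
    obtain ⟨p₀, hp₀⟩ := Function.ne_iff.1 hene
    refine ⟨(p₀ : X × X).1, (p₀ : X × X).2, ?_⟩
    have : η (p₀ : X × X).1 (p₀ : X × X).2 = e p₀ := by
      rw [hη]
      simp only []
      rw [Finset.sum_eq_single_of_mem p₀ (Finset.mem_univ _)]
      · simp
      · intro q _ hq
        rw [if_neg]
        intro hc
        exact hq (Subtype.coe_injective (by simpa using hc))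
    rw [this]
    simpa using hp₀
  exact perturbAux μ ν c π htrim η hsupp hrowzero hcolzero hηne

theorem buildF (π : X → X → ℝ) (F : Finset (X × X))
    (hFinj : ∀ p ∈ F, ∀ q ∈ F, p.1 = q.1 → p = q) :
    ∃ (h₁ : X → X) (μd : X → ℝ),
      (∀ p ∈ F, h₁ p.1 = p.2 ∧ μd p.1 = π p.1 p.2) ∧
      (∀ x, μd x = 0 ∨ ((x, h₁ x) ∈ F ∧ μd x = π x (h₁ x))) := by
  classical
  refine ⟨fun x => if h : ∃ p ∈ F, p.1 = x then h.choose.2 else x,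
    fun x => if h : ∃ p ∈ F, p.1 = x then
      π x (if h' : ∃ p ∈ F, p.1 = x then h'.choose.2 else x) else 0, ?_, ?_⟩
  · intro p hp
    have hex : ∃ q ∈ F, q.1 = p.1 := ⟨p, hp, rfl⟩
    have hch := hex.choose_spec
    have hcp : hex.choose = p := hFinj _ hch.1 _ hp hch.2
    constructor
    · show (if h : ∃ q ∈ F, q.1 = p.1 then h.choose.2 else p.1) = p.2
      rw [dif_pos hex, hcp]
    · show (if h : ∃ q ∈ F, q.1 = p.1 then
          π p.1 (if h' : ∃ q ∈ F, q.1 = p.1 then h'.choose.2 else p.1) else 0) = π p.1 p.2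
      rw [dif_pos hex, dif_pos hex, hcp]
  · intro x
    by_cases hex : ∃ p ∈ F, p.1 = x
    · right
      have hch := hex.choose_spec
      have hxc : (x, (if h : ∃ p ∈ F, p.1 = x then h.choose.2 else x)) = hex.choose := by
        rw [dif_pos hex]
        exact Prod.ext hch.2.symm rfl
      constructor
      · rw [hxc]; exact hch.1
      · show (if h : ∃ p ∈ F, p.1 = x then
            π x (if h' : ∃ p ∈ F, p.1 = x then h'.choose.2 else x) else 0) = _
        rw [dif_pos hex]
    · left
      show (if h : ∃ p ∈ F, p.1 = x then
          π x (if h' : ∃ p ∈ F, p.1 = x then h'.choose.2 else x) else 0) = 0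
      rw [dif_neg hex]

theorem buildB (π : X → X → ℝ) (B : Finset (X × X))
    (hBinj : ∀ p ∈ B, ∀ q ∈ B, p.2 = q.2 → p = q) :
    ∃ (h₂ : X → X) (νd : X → ℝ),
      (∀ p ∈ B, h₂ p.2 = p.1 ∧ νd p.2 = π p.1 p.2) ∧
      (∀ y, νd y = 0 ∨ ((h₂ y, y) ∈ B ∧ νd y = π (h₂ y) y)) := by
  classical
  refine ⟨fun y => if h : ∃ p ∈ B, p.2 = y then h.choose.1 else y,
    fun y => if h : ∃ p ∈ B, p.2 = y then
      π (if h' : ∃ p ∈ B, p.2 = y then h'.choose.1 else y) y else 0, ?_, ?_⟩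
  · intro p hp
    have hex : ∃ q ∈ B, q.2 = p.2 := ⟨p, hp, rfl⟩
    have hch := hex.choose_spec
    have hcp : hex.choose = p := hBinj _ hch.1 _ hp hch.2
    constructor
    · show (if h : ∃ q ∈ B, q.2 = p.2 then h.choose.1 else p.2) = p.1
      rw [dif_pos hex, hcp]
    · show (if h : ∃ q ∈ B, q.2 = p.2 then
          π (if h' : ∃ q ∈ B, q.2 = p.2 then h'.choose.1 else p.2) p.2 else 0) = π p.1 p.2
      rw [dif_pos hex, dif_pos hex, hcp]
  · intro y
    by_cases hex : ∃ p ∈ B, p.2 = y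
    · right
      have hch := hex.choose_spec
      have hxc : ((if h : ∃ p ∈ B, p.2 = y then h.choose.1 else y), y) = hex.choose := by
        rw [dif_pos hex]
        exact Prod.ext rfl hch.2.symm
      constructor
      · rw [hxc]; exact hch.1
      · show (if h : ∃ p ∈ B, p.2 = y then
            π (if h' : ∃ p ∈ B, p.2 = y then h'.choose.1 else y) y else 0) = _
        rw [dif_pos hex]
    · left
      show (if h : ∃ p ∈ B, p.2 = y then
          π (if h' : ∃ p ∈ B, p.2 = y then h'.choose.1 else y) y else 0) = 0
      rw [dif_neg hex]

end Helpers

/-- structure theorem — every trim plan is the sum of two deterministic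
plans given by a diffusive model. -/

theorem trim_plan_diffusive_model {X : Type*} [Fintype X] [DecidableEq X]
    (μ ν : X → ℝ) (c : X → X → ℝ) (π : X → X → ℝ)
    (hμpos : ∀ x, 0 < μ x) (hνpos : ∀ y, 0 < ν y)
    (hmass : ∑ x, μ x = ∑ y, ν y)
    (htrim : IsTrim c μ ν π) :
    ∃ (μd μc νd νc : X → ℝ) (h₁ h₂ : X → X),
      (∀ x, 0 ≤ μd x) ∧ (∀ x, 0 ≤ μc x) ∧ (∀ y, 0 ≤ νd y) ∧ (∀ y, 0 ≤ νc y) ∧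
      (∀ x, μ x = μd x + μc x) ∧ (∀ y, ν y = νd y + νc y) ∧
      (∀ x y, π x y = pushF h₁ μd x y + pushB h₂ νd x y) := by
  classical
  obtain ⟨F, Bn, hUB, hDis, hFinj, hBinj⟩ :=
    decomposeAux (spt π) (noExcess μ ν c π htrim)
  obtain ⟨h₁, μd, hkeyF, haltF⟩ := buildF π F hFinj
  obtain ⟨h₂, νd, hkeyB, haltB⟩ := buildB π Bn hBinj
  obtain ⟨⟨hnn, hrowμ, hcolν⟩, -⟩ := htrim.1
  have hmem_spt : ∀ x y, (x, y) ∈ spt π ↔ π x y ≠ 0 := by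
    intro x y; simp [spt]
  have hμd_nn : ∀ x, 0 ≤ μd x := by
    intro x
    rcases haltF x with h | ⟨_, h⟩
    · rw [h]
    · rw [h]; exact hnn _ _
  have hνd_nn : ∀ y, 0 ≤ νd y := by
    intro y
    rcases haltB y with h | ⟨_, h⟩
    · rw [h]
    · rw [h]; exact hnn _ _
  have hμd_le : ∀ x, μd x ≤ μ x := by
    intro x
    rcases haltF x with h | ⟨_, h⟩
    · rw [h]; exact (hμpos x).le
    · rw [h, ← hrowμ x]
      exact Finset.single_le_sum (fun i _ => hnn x i) (Finset.mem_univ (h₁ x))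
  have hνd_le : ∀ y, νd y ≤ ν y := by
    intro y
    rcases haltB y with h | ⟨_, h⟩
    · rw [h]; exact (hνpos y).le
    · rw [h, ← hcolν y]
      exact Finset.single_le_sum (fun i _ => hnn i y) (Finset.mem_univ (h₂ y))
  refine ⟨μd, fun x => μ x - μd x, νd, fun y => ν y - νd y, h₁, h₂,
    hμd_nn, fun x => by show (0:ℝ) ≤ μ x - μd x; linarith [hμd_le x],
    hνd_nn, fun y => by show (0:ℝ) ≤ ν y - νd y; linarith [hνd_le y],
    fun x => by show μ x = μd x + (μ x - μd x); ring,
    fun y => by show ν y = νd y + (ν y - νd y); ring, ?_⟩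
  intro x y
  simp only [pushF, pushB]
  by_cases hxy : (x, y) ∈ spt π
  · rw [← hUB] at hxy
    rcases Finset.mem_union.1 hxy with hF | hBm
    · obtain ⟨hh1, hμ⟩ := hkeyF (x, y) hF
      rw [if_pos hh1]
      have hQ : (if h₂ y = x then νd y else 0) = 0 := by
        by_cases hh2 : h₂ y = x
        · rw [if_pos hh2]
          rcases haltB y with h | ⟨hmem, _⟩
          · exact h
          · rw [hh2] at hmem
            exact absurd hF (Finset.disjoint_right.1 hDis hmem)
        · rw [if_neg hh2]
      rw [hQ, hμ]; ring
    · obtain ⟨hh2, hν⟩ := hkeyB (x, y) hBm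
      rw [if_pos hh2]
      have hP : (if h₁ x = y then μd x else 0) = 0 := by
        by_cases hh1 : h₁ x = y
        · rw [if_pos hh1]
          rcases haltF x with h | ⟨hmem, _⟩
          · exact h
          · rw [hh1] at hmem
            exact absurd hmem (Finset.disjoint_left.1 hDis · hBm)
        · rw [if_neg hh1]
      rw [hP, hν]; ring
  · have hπ0 : π x y = 0 := not_not.1 (fun h => hxy ((hmem_spt x y).2 h))
    have hP : (if h₁ x = y then μd x else 0) = 0 := by
      by_cases hh1 : h₁ x = y
      · rw [if_pos hh1]
        rcases haltF x with h | ⟨_, h⟩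
        · exact h
        · rw [h, hh1, hπ0]
      · rw [if_neg hh1]
    have hQ : (if h₂ y = x then νd y else 0) = 0 := by
      by_cases hh2 : h₂ y = x
      · rw [if_pos hh2]
        rcases haltB y with h | ⟨_, h⟩
        · exact h
        · rw [h, hh2, hπ0]
      · rw [if_neg hh2]
    rw [hP, hQ, hπ0]; ring
end

section
/- Let μ = (1/4)(δ_{(0,0,0)} + δ_{(1,1,0)} + δ_{(1,0,1)} + δ_{(0,1,1)}) and ν = (1/4)(δ_{(1,1,1)} + δ_{(0,0,1)} + δ_{(0,1,0)} + δ_{(1,0,0)}) on ℝ³ with Euclidean distance cost. The plan π assigning mass 1/12 from each atom of μ to each of its three nearest atoms of ν (at distance 1) is an optimal transportation plan whose support has 12 points; in particular it cannot be written as (Id,h⁽¹⁾)_#μ⁽ᵈ⁾ + (h⁽²⁾,Id)_#ν⁽ᵈ⁾ since 12 > 2·4. -/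
open Finset

section CubeAux
open Finset

abbrev X3 : Type := Fin 2 × Fin 2 × Fin 2
def par3 : X3 → ℕ := fun v => (v.1.val + v.2.1.val + v.2.2.val) % 2
def ham3 : X3 → X3 → ℕ := fun v w =>
  (if v.1 = w.1 then 0 else 1) + (if v.2.1 = w.2.1 then 0 else 1) +
    (if v.2.2 = w.2.2 then 0 else 1)
noncomputable def c3 : X3 → X3 → ℝ := fun v w =>
  Real.sqrt (((v.1.val : ℝ) - (w.1.val : ℝ)) ^ 2 +
    ((v.2.1.val : ℝ) - (w.2.1.val : ℝ)) ^ 2 +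
    ((v.2.2.val : ℝ) - (w.2.2.val : ℝ)) ^ 2)
noncomputable def μ3 : X3 → ℝ := fun v => if par3 v = 0 then 1/4 else 0
noncomputable def ν3 : X3 → ℝ := fun w => if par3 w = 1 then 1/4 else 0
noncomputable def π3 : X3 → X3 → ℝ := fun v w =>
  if par3 v = 0 ∧ par3 w = 1 ∧ ham3 v w = 1 then 1/12 else 0

lemma c3_one {x y : X3} (h : ham3 x y = 1) : c3 x y = 1 := by
  obtain ⟨a,b,d⟩ := x; obtain ⟨a',b',d'⟩ := y
  fin_cases a <;> fin_cases b <;> fin_cases d <;> fin_cases a' <;> fin_cases b' <;>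
    fin_cases d' <;> simp_all [ham3, c3]

lemma c3_ge {x y : X3} (h : x ≠ y) : 1 ≤ c3 x y := by
  have h1 : ∀ a : ℝ, 1 ≤ a → 1 ≤ Real.sqrt a := fun a ha => by
    rw [show (1:ℝ) = Real.sqrt 1 by simp]; exact Real.sqrt_le_sqrt ha
  obtain ⟨a,b,d⟩ := x; obtain ⟨a',b',d'⟩ := y
  fin_cases a <;> fin_cases b <;> fin_cases d <;> fin_cases a' <;> fin_cases b' <;>
    fin_cases d' <;> simp_all [c3] <;> exact h1 _ (by norm_num)

lemma pi3_nonneg (x y : X3) : 0 ≤ π3 x y := by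
  unfold π3; split <;> norm_num

lemma row3 (x : X3) : ∑ y, π3 x y = μ3 x := by
  obtain ⟨a,b,d⟩ := x
  fin_cases a <;> fin_cases b <;> fin_cases d <;>
    simp [π3, μ3, par3, ham3, Fintype.sum_prod_type, Fin.sum_univ_succ] <;> norm_num

lemma col3 (y : X3) : ∑ x, π3 x y = ν3 y := by
  obtain ⟨a,b,d⟩ := y
  fin_cases a <;> fin_cases b <;> fin_cases d <;>
    simp [π3, ν3, par3, ham3, Fintype.sum_prod_type, Fin.sum_univ_succ] <;> norm_num

lemma plan3 : IsPlan μ3 ν3 π3 := ⟨pi3_nonneg, row3, col3⟩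

lemma mass3 : ∑ x : X3, μ3 x = 1 := by
  simp [μ3, par3, Fintype.sum_prod_type, Fin.sum_univ_succ]; norm_num

lemma tcost3 : tcost c3 π3 = 1 := by
  have key : ∀ x y : X3, c3 x y * π3 x y = π3 x y := by
    intro x y
    by_cases h : par3 x = 0 ∧ par3 y = 1 ∧ ham3 x y = 1
    · rw [c3_one h.2.2, one_mul]
    · simp [π3, h]
  calc tcost c3 π3 = ∑ x, ∑ y, π3 x y := by
        unfold tcost; exact Finset.sum_congr rfl fun x _ =>
          Finset.sum_congr rfl fun y _ => key x y
    _ = ∑ x : X3, μ3 x := Finset.sum_congr rfl fun x _ => row3 x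
    _ = 1 := mass3

lemma diag_zero {π' : X3 → X3 → ℝ} (hp : IsPlan μ3 ν3 π') (x : X3) : π' x x = 0 := by
  obtain ⟨hpos, hrow, hcol⟩ := hp
  have h1 : π' x x ≤ μ3 x := by
    rw [← hrow x]
    exact Finset.single_le_sum (fun y _ => hpos x y) (Finset.mem_univ x)
  have h2 : π' x x ≤ ν3 x := by
    rw [← hcol x]
    exact Finset.single_le_sum (fun y _ => hpos y x) (Finset.mem_univ x)
  have := hpos x x
  by_cases h : par3 x = 0
  · have : ν3 x = 0 := by simp [ν3, h]
    linarith [this ▸ h2]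
  · have : μ3 x = 0 := by simp [μ3, h]
    linarith [this ▸ h1]

lemma opt3 : IsOptimal c3 μ3 ν3 π3 := by
  refine ⟨plan3, fun π' hp => ?_⟩
  rw [tcost3]
  have key : ∀ x y : X3, π' x y ≤ c3 x y * π' x y := by
    intro x y
    by_cases h : x = y
    · subst h; rw [diag_zero hp]; simp
    · nlinarith [c3_ge h, hp.1 x y]
  calc (1:ℝ) = ∑ x : X3, μ3 x := mass3.symm
    _ = ∑ x, ∑ y, π' x y := (Finset.sum_congr rfl fun x _ => (hp.2.1 x)).symm
    _ ≤ ∑ x, ∑ y, c3 x y * π' x y :=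
        Finset.sum_le_sum fun x _ => Finset.sum_le_sum fun y _ => key x y
    _ = tcost c3 π' := rfl

lemma spt3_eq : spt π3 = Finset.univ.filter
    (fun p : X3 × X3 => par3 p.1 = 0 ∧ par3 p.2 = 1 ∧ ham3 p.1 p.2 = 1) := by
  unfold spt
  ext p
  simp only [Finset.mem_filter, Finset.mem_univ, true_and]
  unfold π3
  split <;> simp_all

lemma spt3_card : (spt π3).card = 12 := by
  rw [spt3_eq]
  decide

lemma msupp3_mu : (msupp μ3).card = 4 := by
  have : msupp μ3 = Finset.univ.filter (fun x : X3 => par3 x = 0) := by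
    unfold msupp μ3; ext x
    simp only [Finset.mem_filter, Finset.mem_univ, true_and]
    split <;> simp_all
  rw [this]; decide

lemma msupp3_nu : (msupp ν3).card = 4 := by
  have : msupp ν3 = Finset.univ.filter (fun x : X3 => par3 x = 1) := by
    unfold msupp ν3; ext x
    simp only [Finset.mem_filter, Finset.mem_univ, true_and]
    split <;> simp_all
  rw [this]; decide

lemma no_diffusive3 :
    ¬ ∃ (μd νd : X3 → ℝ) (h₁ h₂ : X3 → X3),
        (∀ x, 0 ≤ μd x) ∧ (∀ y, 0 ≤ νd y) ∧
        (∀ x, μd x ≤ μ3 x) ∧ (∀ y, νd y ≤ ν3 y) ∧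
        (∀ x y, π3 x y = pushF h₁ μd x y + pushB h₂ νd x y) := by
  classical
  rintro ⟨μd, νd, h₁, h₂, hμ0, hν0, hμle, hνle, heq⟩
  have hsub : spt π3 ⊆ (msupp μd).image (fun x => (x, h₁ x)) ∪
      (msupp νd).image (fun y => (h₂ y, y)) := by
    intro p hp
    have hne : π3 p.1 p.2 ≠ 0 := by
      have := Finset.mem_filter.mp hp; exact this.2
    rw [heq p.1 p.2] at hne
    rcases (by by_contra hc; push_neg at hc; rw [hc.1, hc.2] at hne; simp at hne :
        pushF h₁ μd p.1 p.2 ≠ 0 ∨ pushB h₂ νd p.1 p.2 ≠ 0) with h | h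
    · unfold pushF at h
      rw [Finset.mem_union]
      left
      rw [Finset.mem_image]
      refine ⟨p.1, ?_, ?_⟩
      · unfold msupp
        simp only [Finset.mem_filter, Finset.mem_univ, true_and]
        intro h0; rw [h0] at h; simp at h
      · by_cases he : h₁ p.1 = p.2
        · rw [he]
        · simp [he] at h
    · unfold pushB at h
      rw [Finset.mem_union]
      right
      rw [Finset.mem_image]
      refine ⟨p.2, ?_, ?_⟩
      · unfold msupp
        simp only [Finset.mem_filter, Finset.mem_univ, true_and]
        intro h0; rw [h0] at h; simp at h
      · by_cases he : h₂ p.2 = p.1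
        · rw [he]
        · simp [he] at h
  have hμsub : msupp μd ⊆ msupp μ3 := by
    intro x hx
    unfold msupp at *
    simp only [Finset.mem_filter, Finset.mem_univ, true_and] at *
    intro h0
    have := hμle x; have := hμ0 x
    exact hx (le_antisymm (h0 ▸ hμle x) (hμ0 x))
  have hνsub : msupp νd ⊆ msupp ν3 := by
    intro x hx
    unfold msupp at *
    simp only [Finset.mem_filter, Finset.mem_univ, true_and] at *
    intro h0
    exact hx (le_antisymm (h0 ▸ hνle x) (hν0 x))
  have hc : (spt π3).card ≤ 8 := by
    calc (spt π3).card ≤ ((msupp μd).image (fun x => (x, h₁ x)) ∪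
        (msupp νd).image (fun y => (h₂ y, y))).card := Finset.card_le_card hsub
      _ ≤ ((msupp μd).image (fun x => (x, h₁ x))).card +
          ((msupp νd).image (fun y => (h₂ y, y))).card := Finset.card_union_le _ _
      _ ≤ (msupp μd).card + (msupp νd).card := by
          gcongr <;> exact Finset.card_image_le
      _ ≤ (msupp μ3).card + (msupp ν3).card :=
          add_le_add (Finset.card_le_card hμsub) (Finset.card_le_card hνsub)
      _ = 8 := by rw [msupp3_mu, msupp3_nu]
  rw [spt3_card] at hc
  omega

end CubeAux

/-- the uniform plan on the 12 unit edges of the cube, between the uniform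
measures on even and odd vertices, is optimal, has support of cardinality 12, and hence
admits no diffusive-model decomposition. -/
theorem cube_plan_optimal_not_diffusive :
    letI X := Fin 2 × Fin 2 × Fin 2
    letI par : X → ℕ := fun v => (v.1.val + v.2.1.val + v.2.2.val) % 2
    letI ham : X → X → ℕ := fun v w =>
      (if v.1 = w.1 then 0 else 1) + (if v.2.1 = w.2.1 then 0 else 1) +
        (if v.2.2 = w.2.2 then 0 else 1)
    letI c : X → X → ℝ := fun v w =>
      Real.sqrt (((v.1.val : ℝ) - (w.1.val : ℝ)) ^ 2 +
        ((v.2.1.val : ℝ) - (w.2.1.val : ℝ)) ^ 2 +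
        ((v.2.2.val : ℝ) - (w.2.2.val : ℝ)) ^ 2)
    letI μ : X → ℝ := fun v => if par v = 0 then 1/4 else 0
    letI ν : X → ℝ := fun w => if par w = 1 then 1/4 else 0
    letI π : X → X → ℝ := fun v w =>
      if par v = 0 ∧ par w = 1 ∧ ham v w = 1 then 1/12 else 0
    IsOptimal c μ ν π ∧ (spt π).card = 12 ∧
      ¬ ∃ (μd νd : X → ℝ) (h₁ h₂ : X → X),
          (∀ x, 0 ≤ μd x) ∧ (∀ y, 0 ≤ νd y) ∧
          (∀ x, μd x ≤ μ x) ∧ (∀ y, νd y ≤ ν y) ∧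
          (∀ x y, π x y = pushF h₁ μd x y + pushB h₂ νd x y) := by
  exact ⟨opt3, spt3_card, no_diffusive3⟩
end

section
/- Let π be a trim plan between discrete measures μ, ν on a finite set X with cost c, admitting a diffusive model π = (Id,h⁽¹⁾)_#μ⁽ᵈ⁾ + (h⁽²⁾,Id)_#ν⁽ᵈ⁾. Then the optimal transport cost satisfies W_c(μ,ν) = ∑_x c(x, h⁽¹⁾(x)) μ⁽ᵈ⁾_x + ∑_y c(h⁽²⁾(y), y) ν⁽ᵈ⁾_y. -/
open Finset

/-- for a trim plan with a diffusive model, the optimal transport cost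
decomposes along the two diffusive schemes. -/
theorem Wc_eq_diffusive_sum {X : Type*} [Fintype X] [DecidableEq X]
    (μ ν : X → ℝ) (c : X → X → ℝ) (π : X → X → ℝ)
    (hμ0 : ∀ x, 0 ≤ μ x) (hν0 : ∀ y, 0 ≤ ν y)
    (hμ1 : ∑ x, μ x = 1) (hν1 : ∑ y, ν y = 1)
    (hc : ∀ x y, 0 ≤ c x y)
    (htrim : IsTrim c μ ν π)
    (μd μc νd νc : X → ℝ) (h₁ h₂ : X → X)
    (hμd0 : ∀ x, 0 ≤ μd x) (hμc0 : ∀ x, 0 ≤ μc x)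
    (hνd0 : ∀ y, 0 ≤ νd y) (hνc0 : ∀ y, 0 ≤ νc y)
    (hμdec : ∀ x, μ x = μd x + μc x) (hνdec : ∀ y, ν y = νd y + νc y)
    (hdec : ∀ x y, π x y = pushF h₁ μd x y + pushB h₂ νd x y) :
    Wc c μ ν = ∑ x, c x (h₁ x) * μd x + ∑ y, c (h₂ y) y * νd y := by
  obtain ⟨⟨hplan, hopt⟩, _⟩ := htrim
  have hW : Wc c μ ν = tcost c π := by
    apply IsLeast.csInf_eq
    constructor
    · exact ⟨π, hplan, rfl⟩
    · rintro r ⟨π', hπ', rfl⟩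
      exact hopt π' hπ'
  rw [hW]
  have : tcost c π = (∑ x, ∑ y, c x y * pushF h₁ μd x y)
      + (∑ x, ∑ y, c x y * pushB h₂ νd x y) := by
    unfold tcost
    rw [← Finset.sum_add_distrib]
    refine Finset.sum_congr rfl fun x _ => ?_
    rw [← Finset.sum_add_distrib]
    refine Finset.sum_congr rfl fun y _ => ?_
    rw [hdec, mul_add]
  rw [this]
  congr 1
  · refine Finset.sum_congr rfl fun x _ => ?_
    simp [pushF, mul_ite, Finset.sum_ite_eq]
  · rw [Finset.sum_comm]
    refine Finset.sum_congr rfl fun y _ => ?_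
    simp [pushB, mul_ite, Finset.sum_ite_eq]
end

section
/- Let μ, ν be discrete probability measures on a finite set X, c : X × X → ℝ≥0, and π a trim optimal plan with a diffusive model. Setting α = min over atoms of the diffusive parts of {μ⁽ᵈ⁾_a, ν⁽ᵈ⁾_b}, one has W_c(μ,ν) ≥ α · W_c^{(∞)}(μ,ν), where W_c^{(∞)}(μ,ν) = inf_{π ∈ Π(μ,ν)} ‖c‖_{L^∞_π}. -/
open Finset

/-- `W_c(μ,ν) ≥ α · W_c^{(∞)}(μ,ν)` where `α` is the minimal atom mass of
the diffusive parts of a diffusive model of a trim plan. -/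
theorem Wc_ge_alpha_mul_Winf {X : Type*} [Fintype X] [DecidableEq X]
    (μ ν : X → ℝ) (c : X → X → ℝ) (π : X → X → ℝ)
    (hμ0 : ∀ x, 0 ≤ μ x) (hν0 : ∀ y, 0 ≤ ν y)
    (hμ1 : ∑ x, μ x = 1) (hν1 : ∑ y, ν y = 1)
    (hc : ∀ x y, 0 ≤ c x y)
    (htrim : IsTrim c μ ν π)
    (μd μc νd νc : X → ℝ) (h₁ h₂ : X → X)
    (hμd0 : ∀ x, 0 ≤ μd x) (hμc0 : ∀ x, 0 ≤ μc x)
    (hνd0 : ∀ y, 0 ≤ νd y) (hνc0 : ∀ y, 0 ≤ νc y)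
    (hμdec : ∀ x, μ x = μd x + μc x) (hνdec : ∀ y, ν y = νd y + νc y)
    (hdec : ∀ x y, π x y = pushF h₁ μd x y + pushB h₂ νd x y) :
    Wc c μ ν ≥
      WithTop.untopD 0 ((((msupp μd).image μd) ∪ ((msupp νd).image νd)).min) * Winf c μ ν := by
  classical
  set S := (((msupp μd).image μd) ∪ ((msupp νd).image νd)) with hS
  set α := WithTop.untopD 0 (S.min) with hα
  have hπplan := htrim.1.1
  have hπ0 : ∀ x y, 0 ≤ π x y := hπplan.1
  have htc0 : ∀ π' : X → X → ℝ, (∀ x y, 0 ≤ π' x y) → 0 ≤ tcost c π' := by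
    intro π' h
    exact Finset.sum_nonneg fun x _ => Finset.sum_nonneg fun y _ =>
      mul_nonneg (hc x y) (h x y)
  have hWc : Wc c μ ν = tcost c π := by
    apply le_antisymm
    · apply csInf_le
      · refine ⟨0, ?_⟩
        rintro r ⟨π', hπ', rfl⟩
        exact htc0 π' hπ'.1
      · exact ⟨π, hπplan, rfl⟩
    · refine le_csInf ⟨tcost c π, ⟨π, hπplan, rfl⟩⟩ ?_
      rintro r ⟨π', hπ', rfl⟩
      exact htrim.1.2 π' hπ'
  have hlinf0 : ∀ π' : X → X → ℝ, 0 ≤ linf c π' := by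
    intro π'
    rcases h : ((spt π').image fun p => c p.1 p.2).max with _ | m
    · have : linf c π' = 0 := by unfold linf; rw [h]; rfl
      rw [this]
    · have hm := Finset.mem_of_max h
      simp only [Finset.mem_image] at hm
      obtain ⟨p, _, hp⟩ := hm
      have : linf c π' = m := by unfold linf; rw [h]; rfl
      rw [this]
      exact hp ▸ hc p.1 p.2
  have hWinf : Winf c μ ν ≤ linf c π := by
    apply csInf_le
    · refine ⟨0, ?_⟩
      rintro r ⟨π', _, rfl⟩
      exact hlinf0 π'
    · exact ⟨π, hπplan, rfl⟩
  have hα0 : 0 ≤ α := by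
    rw [hα]
    rcases h : S.min with _ | m
    · exact le_refl _
    · have hm := Finset.mem_of_min h
      rw [hS, Finset.mem_union] at hm
      have h0m : 0 ≤ m := by
        rcases hm with hm | hm
        · obtain ⟨x, _, hx⟩ := Finset.mem_image.mp hm
          exact hx ▸ hμd0 x
        · obtain ⟨x, _, hx⟩ := Finset.mem_image.mp hm
          exact hx ▸ hνd0 x
      exact h0m
  have hkey : ∀ p ∈ spt π, α ≤ π p.1 p.2 := by
    rintro ⟨x, y⟩ hp
    simp only [spt, Finset.mem_filter] at hp
    have hne := hp.2
    rw [hdec x y] at hne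
    have h1 : 0 ≤ pushF h₁ μd x y := by
      unfold pushF; split
      · exact hμd0 x
      · exact le_refl 0
    have h2 : 0 ≤ pushB h₂ νd x y := by
      unfold pushB; split
      · exact hνd0 y
      · exact le_refl 0
    have hle : ∀ a : ℝ, a ∈ S → α ≤ a ∧ π x y = pushF h₁ μd x y + pushB h₂ νd x y := by
      intro a ha
      constructor
      · have hne' : S.Nonempty := ⟨a, ha⟩
        have := Finset.min'_le S a ha
        rwa [hα, ← Finset.coe_min' hne', WithTop.untopD_coe]
      · exact hdec x y
    rcases eq_or_ne (pushF h₁ μd x y) 0 with hF | hF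
    · -- then pushB ≠ 0
      have hB : pushB h₂ νd x y ≠ 0 := by
        intro h; apply hne; rw [hF, h, add_zero]
      have hh : h₂ y = x := by
        by_contra h; apply hB; unfold pushB; simp [h]
      have hν : νd y ≠ 0 := by
        intro h; apply hB; unfold pushB; simp [h]
      have hmem : νd y ∈ S := by
        rw [hS, Finset.mem_union]
        right
        exact Finset.mem_image_of_mem νd (by simp [msupp, hν])
      obtain ⟨hαle, hπeq⟩ := hle (νd y) hmem
      have : νd y ≤ π x y := by
        rw [hπeq]
        have : pushB h₂ νd x y = νd y := by unfold pushB; simp [hh]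
        linarith [h1, this.ge, this.le]
      linarith
    · have hh : h₁ x = y := by
        by_contra h; apply hF; unfold pushF; simp [h]
      have hμ : μd x ≠ 0 := by
        intro h; apply hF; unfold pushF; simp [h]
      have hmem : μd x ∈ S := by
        rw [hS, Finset.mem_union]
        left
        exact Finset.mem_image_of_mem μd (by simp [msupp, hμ])
      obtain ⟨hαle, hπeq⟩ := hle (μd x) hmem
      have : μd x ≤ π x y := by
        rw [hπeq]
        have : pushF h₁ μd x y = μd x := by unfold pushF; simp [hh]
        linarith [h2, this.ge, this.le]
      linarith
  have hmain : α * linf c π ≤ tcost c π := by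
    rcases hm : ((spt π).image fun p => c p.1 p.2).max with _ | m
    · have hl : linf c π = 0 := by unfold linf; rw [hm]; rfl
      rw [hl, mul_zero]
      exact htc0 π hπ0
    · have hmem := Finset.mem_of_max hm
      rw [Finset.mem_image] at hmem
      obtain ⟨p, hpspt, hpc⟩ := hmem
      have hl : linf c π = m := by unfold linf; rw [hm]; rfl
      rw [hl]
      have h1 : α * m ≤ c p.1 p.2 * π p.1 p.2 := by
        rw [← hpc, mul_comm α (c p.1 p.2)]
        exact mul_le_mul_of_nonneg_left (hkey p hpspt) (hc p.1 p.2)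
      have h2 : c p.1 p.2 * π p.1 p.2 ≤ ∑ y, c p.1 y * π p.1 y :=
        Finset.single_le_sum (f := fun y => c p.1 y * π p.1 y)
          (fun y _ => mul_nonneg (hc p.1 y) (hπ0 p.1 y)) (Finset.mem_univ p.2)
      have h3 : (∑ y, c p.1 y * π p.1 y) ≤ tcost c π :=
        Finset.single_le_sum (f := fun x => ∑ y, c x y * π x y)
          (fun x _ => Finset.sum_nonneg fun y _ => mul_nonneg (hc x y) (hπ0 x y))
          (Finset.mem_univ p.1)
      linarith
  have := mul_le_mul_of_nonneg_left hWinf hα0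
  rw [ge_iff_le, hWc]
  calc α * Winf c μ ν ≤ α * linf c π := this
    _ ≤ tcost c π := hmain
end

section
/- For any trim plan π between discrete measures μ, ν on a finite set X, there exists a diffusive model such that every atom of μ⁽ᵈ⁾ and ν⁽ᵈ⁾ has mass at least min over pairs of subsets (A,B) ⊆ X × X with |∑_{x∈A} μ_x − ∑_{y∈B} ν_y| > 0 of |∑_{x∈A} μ_x − ∑_{y∈B} ν_y|. In particular, the constant α of the diffusive model is bounded below by a quantity depending only on μ and ν (not on the cost). -/
open Finset

set_option linter.unusedSectionVars false in
lemma mem_spt {X : Type*} [Fintype X] {π : X → X → ℝ} {p : X × X} :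
    p ∈ spt π ↔ π p.1 p.2 ≠ 0 := by
  classical
  simp [spt]

section Kill
variable {X : Type*} [Fintype X] [DecidableEq X] {c π : X → X → ℝ} {μ ν : X → ℝ}

lemma tcost_add_smul (c π δ : X → X → ℝ) (t : ℝ) :
    tcost c (fun x y => π x y + t * δ x y) = tcost c π + t * tcost c δ := by
  unfold tcost
  rw [Finset.mul_sum, ← Finset.sum_add_distrib]
  refine Finset.sum_congr rfl fun x _ => ?_
  rw [Finset.mul_sum, ← Finset.sum_add_distrib]
  refine Finset.sum_congr rfl fun y _ => ?_
  ring

lemma plan_add_smul (hplan : IsPlan μ ν π) (δ : X → X → ℝ) (t : ℝ)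
    (hnn : ∀ x y, 0 ≤ π x y + t * δ x y)
    (hr : ∀ x, ∑ y, δ x y = 0) (hc : ∀ y, ∑ x, δ x y = 0) :
    IsPlan μ ν (fun x y => π x y + t * δ x y) := by
  refine ⟨hnn, fun x => ?_, fun y => ?_⟩
  · rw [Finset.sum_add_distrib, ← Finset.mul_sum, hr x, hplan.2.1 x, mul_zero, add_zero]
  · rw [Finset.sum_add_distrib, ← Finset.mul_sum, hc y, hplan.2.2 y, mul_zero, add_zero]

lemma no_kernel_of_trim (htrim : IsTrim c μ ν π) (δ : X → X → ℝ)
    (hδ0 : ∃ p : X × X, δ p.1 p.2 ≠ 0)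
    (hsupp : ∀ x y, δ x y ≠ 0 → π x y ≠ 0)
    (hr : ∀ x, ∑ y, δ x y = 0) (hc : ∀ y, ∑ x, δ x y = 0) : False := by
  classical
  obtain ⟨⟨hplan, hopt⟩, hmin⟩ := htrim
  have hπnn := hplan.1
  obtain ⟨p₁, hp₁⟩ := hδ0
  have hSne : (spt π).Nonempty := ⟨p₁, mem_spt.mpr (hsupp _ _ hp₁)⟩
  -- Step 1 : tcost c δ = 0
  set ε := (spt π).inf' hSne (fun p => π p.1 p.2 / (1 + |δ p.1 p.2|)) with hε
  have hεpos : 0 < ε := by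
    rw [hε, Finset.lt_inf'_iff]
    intro p hp
    have h0 : 0 < π p.1 p.2 := lt_of_le_of_ne (hπnn _ _) (Ne.symm (mem_spt.mp hp))
    have h1 : (0:ℝ) < 1 + |δ p.1 p.2| := by positivity
    exact div_pos h0 h1
  have hnnpm : ∀ s : ℝ, |s| ≤ ε → ∀ x y, 0 ≤ π x y + s * δ x y := by
    intro s hs x y
    by_cases h : δ x y = 0
    · rw [h, mul_zero, add_zero]; exact hπnn x y
    · have hmem : (x, y) ∈ spt π := mem_spt.mpr (hsupp _ _ h)
      have h1 : ε ≤ π x y / (1 + |δ x y|) := Finset.inf'_le _ hmem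
      have h2 : (0:ℝ) < 1 + |δ x y| := by positivity
      have h3 : ε * (1 + |δ x y|) ≤ π x y := by
        rw [← le_div_iff₀ h2]; exact h1
      have h4 : |s * δ x y| ≤ ε * |δ x y| := by
        rw [abs_mul]
        exact mul_le_mul_of_nonneg_right hs (abs_nonneg _)
      have h5 : -(ε * |δ x y|) ≤ s * δ x y := by
        have := neg_abs_le (s * δ x y)
        linarith
      nlinarith [abs_nonneg (δ x y)]
  have hq : tcost c δ = 0 := by
    have hpl1 := plan_add_smul hplan δ ε (hnnpm ε (by rw [abs_of_pos hεpos]) ) hr hc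
    have hpl2 := plan_add_smul hplan δ (-ε)
      (hnnpm (-ε) (by rw [abs_neg, abs_of_pos hεpos]) ) hr hc
    have h1 := hopt _ hpl1
    have h2 := hopt _ hpl2
    rw [tcost_add_smul] at h1 h2
    have : ε * tcost c δ = 0 := by linarith
    rcases mul_eq_zero.mp this with h | h
    · exact absurd h (ne_of_gt hεpos)
    · exact h
  -- Step 2 : kill an entry
  have key : ∀ γ : X → X → ℝ, (∀ x y, γ x y ≠ 0 → π x y ≠ 0) →
      (∀ x, ∑ y, γ x y = 0) → (∀ y, ∑ x, γ x y = 0) → tcost c γ = 0 →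
      (∃ p : X × X, γ p.1 p.2 < 0) → False := by
    intro γ hγsupp hγr hγc hγcost ⟨p₂, hp₂⟩
    set N := (spt π).filter (fun p => γ p.1 p.2 < 0) with hN
    have hNne : N.Nonempty :=
      ⟨p₂, Finset.mem_filter.mpr ⟨mem_spt.mpr (hγsupp _ _ (ne_of_lt hp₂)), hp₂⟩⟩
    set t := N.inf' hNne (fun p => π p.1 p.2 / (-γ p.1 p.2)) with ht
    have htpos : 0 < t := by
      rw [ht, Finset.lt_inf'_iff]
      intro p hp
      obtain ⟨hp1, hp2⟩ := Finset.mem_filter.mp hp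
      exact div_pos (lt_of_le_of_ne (hπnn _ _) (Ne.symm (mem_spt.mp hp1))) (by linarith)
    obtain ⟨q, hqN, hqt⟩ := Finset.exists_mem_eq_inf' hNne (fun p => π p.1 p.2 / (-γ p.1 p.2))
    obtain ⟨hqS, hqneg⟩ := Finset.mem_filter.mp hqN
    have hnn2 : ∀ x y, 0 ≤ π x y + t * γ x y := by
      intro x y
      by_cases h : γ x y < 0
      · have hmem : (x, y) ∈ N :=
          Finset.mem_filter.mpr ⟨mem_spt.mpr (hγsupp _ _ (ne_of_lt h)), h⟩
        have h1 : t ≤ π x y / (-γ x y) := Finset.inf'_le _ hmem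
        have h2 : t * (-γ x y) ≤ π x y := by
          rw [← le_div_iff₀ (by linarith : (0:ℝ) < -γ x y)]
          exact h1
        linarith
      · push_neg at h
        nlinarith [mul_nonneg htpos.le h, hπnn x y]
    have hpl2 : IsPlan μ ν (fun x y => π x y + t * γ x y) := plan_add_smul hplan γ t hnn2 hγr hγc
    have hopt2 : IsOptimal c μ ν (fun x y => π x y + t * γ x y) := by
      refine ⟨hpl2, fun τ hτ => ?_⟩
      rw [tcost_add_smul, hγcost, mul_zero, add_zero]
      exact hopt τ hτ
    have hcard := hmin _ hopt2
    have hγq : γ q.1 q.2 ≠ 0 := ne_of_lt hqneg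
    have hq0 : π q.1 q.2 + t * γ q.1 q.2 = 0 := by
      rw [ht, hqt, div_neg, neg_mul, div_mul_cancel₀ _ hγq]
      ring
    have hsub : spt (fun x y => π x y + t * γ x y) ⊆ (spt π).erase q := by
      intro p hp
      have hp' := mem_spt.mp hp
      have hπp : π p.1 p.2 ≠ 0 := by
        intro h0
        have : γ p.1 p.2 = 0 := by
          by_contra h1
          exact hγsupp _ _ h1 h0
        rw [h0, this, mul_zero, add_zero] at hp'
        exact hp' rfl
      refine Finset.mem_erase.mpr ⟨?_, mem_spt.mpr hπp⟩
      intro hpq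
      rw [hpq] at hp'
      exact hp' hq0
    have hcard2 : (spt (fun x y => π x y + t * γ x y)).card ≤ (spt π).card - 1 := by
      calc _ ≤ ((spt π).erase q).card := Finset.card_le_card hsub
      _ = (spt π).card - 1 := Finset.card_erase_of_mem hqS
    have hqmem : 0 < (spt π).card := Finset.card_pos.mpr ⟨q, hqS⟩
    omega
  rcases lt_or_gt_of_ne hp₁ with h | h
  · exact key δ hsupp hr hc hq ⟨p₁, h⟩
  · refine key (fun x y => -δ x y) (fun x y hh => hsupp x y (by simpa using hh))
      (fun x => by rw [Finset.sum_neg_distrib, hr x, neg_zero])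
      (fun y => by rw [Finset.sum_neg_distrib, hc y, neg_zero]) ?_ ⟨p₁, by simpa using h⟩
    have : tcost c (fun x y => -δ x y) = -tcost c δ := by
      unfold tcost
      rw [← Finset.sum_neg_distrib]
      refine Finset.sum_congr rfl fun x _ => ?_
      rw [← Finset.sum_neg_distrib]
      refine Finset.sum_congr rfl fun y _ => ?_
      ring
    rw [this, hq, neg_zero]

end Kill

section Reduce
variable {X : Type*} [Fintype X] [DecidableEq X] {c π : X → X → ℝ} {μ ν : X → ℝ}

lemma reduce_row (htrim : IsTrim c μ ν π) (x₀ y₀ : X) (h0 : π x₀ y₀ ≠ 0)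
    (hleaf : ∀ y, y ≠ y₀ → π x₀ y = 0) :
    μ x₀ = π x₀ y₀ ∧ π x₀ y₀ ≤ ν y₀ ∧
    IsTrim c (Function.update μ x₀ 0) (Function.update ν y₀ (ν y₀ - π x₀ y₀))
      (fun x y => if x = x₀ then 0 else π x y) ∧
    (spt (fun x y : X => if x = x₀ then 0 else π x y)).card + 1 = (spt π).card := by
  classical
  obtain ⟨⟨hplan, hopt⟩, hmin⟩ := htrim
  have hπnn := hplan.1
  set m := π x₀ y₀ with hm
  set μ' := Function.update μ x₀ 0 with hμ'def
  set ν' := Function.update ν y₀ (ν y₀ - m) with hν'def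
  set π' : X → X → ℝ := fun x y => if x = x₀ then 0 else π x y with hπ'def
  have hμx₀ : μ x₀ = m := by
    rw [← hplan.2.1 x₀]
    exact Finset.sum_eq_single y₀ (fun y _ hy => hleaf y hy) (fun h => absurd (Finset.mem_univ y₀) h)
  have hle : m ≤ ν y₀ := by
    rw [← hplan.2.2 y₀]
    exact Finset.single_le_sum (fun x _ => hπnn x y₀) (Finset.mem_univ x₀)
  -- π' is a plan for (μ', ν')
  have hcolsum : ∀ y, ∑ x, π' x y = ν y - (if y = y₀ then m else 0) := by
    intro y
    have h1 : ∀ x, π' x y = π x y - (if x = x₀ then π x y else 0) := by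
      intro x; by_cases h : x = x₀ <;> simp [hπ'def, h]
    rw [Finset.sum_congr rfl (fun x _ => h1 x), Finset.sum_sub_distrib,
      Finset.sum_ite_eq' Finset.univ x₀ (fun x => π x y), if_pos (Finset.mem_univ x₀),
      hplan.2.2 y]
    congr 1
    by_cases h : y = y₀
    · subst h; simp [hm]
    · simp [h, hleaf y h]
  have hplan' : IsPlan μ' ν' π' := by
    refine ⟨fun x y => ?_, fun x => ?_, fun y => ?_⟩
    · by_cases h : x = x₀ <;> simp [hπ'def, h, hπnn x y]
    · by_cases h : x = x₀
      · subst h; simp [hπ'def, hμ'def]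
      · simp only [hπ'def, if_neg h]
        rw [hplan.2.1 x, hμ'def, Function.update_of_ne h]
    · rw [hcolsum y]
      by_cases h : y = y₀
      · subst h; simp [hν'def]
      · simp [hν'def, h, Function.update_of_ne h]
  -- cost of π'
  have hrowcost : ∑ y, c x₀ y * π x₀ y = c x₀ y₀ * m :=
    Finset.sum_eq_single y₀ (fun y _ hy => by rw [hleaf y hy, mul_zero]) (by simp)
  have hcost' : tcost c π' = tcost c π - c x₀ y₀ * m := by
    unfold tcost
    have h1 : ∀ x, ∑ y, c x y * π' x y
        = (∑ y, c x y * π x y) - (if x = x₀ then ∑ y, c x y * π x y else 0) := by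
      intro x; by_cases h : x = x₀ <;> simp [hπ'def, h]
    rw [Finset.sum_congr rfl (fun x _ => h1 x), Finset.sum_sub_distrib,
      Finset.sum_ite_eq' Finset.univ x₀ (fun x => ∑ y, c x y * π x y),
      if_pos (Finset.mem_univ x₀), hrowcost]
  -- lifting plans of (μ', ν') to plans of (μ, ν)
  set L : (X → X → ℝ) → (X → X → ℝ) :=
    fun τ x y => if x = x₀ then (if y = y₀ then m else 0) else τ x y with hLdef
  have hmpos : 0 < m := lt_of_le_of_ne (hπnn x₀ y₀) (Ne.symm h0)
  have hLfacts : ∀ τ : X → X → ℝ, IsPlan μ' ν' τ →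
      (∀ y, τ x₀ y = 0) ∧ IsPlan μ ν (L τ) ∧ tcost c (L τ) = tcost c τ + c x₀ y₀ * m := by
    intro τ hτ
    have hrow0 : ∀ y, τ x₀ y = 0 := by
      have hz : ∑ y, τ x₀ y = 0 := by
        rw [hτ.2.1 x₀, hμ'def, Function.update_self]
      intro y
      exact (Finset.sum_eq_zero_iff_of_nonneg (fun y _ => hτ.1 x₀ y)).mp hz y
        (Finset.mem_univ y)
    have hpt : ∀ x y, L τ x y = τ x y + (if x = x₀ then (if y = y₀ then m else 0) else 0) := by
      intro x y
      by_cases h : x = x₀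
      · subst h; simp [hLdef, hrow0 y]
      · simp [hLdef, h]
    have hLplan : IsPlan μ ν (L τ) := by
      refine ⟨fun x y => ?_, fun x => ?_, fun y => ?_⟩
      · rw [hpt]
        by_cases h : x = x₀ <;> by_cases h2 : y = y₀ <;> simp [h, h2] <;>
          linarith [hmpos, hτ.1 x y, hτ.1 x₀ y₀, hτ.1 x₀ y, hτ.1 x y₀]
      · rw [Finset.sum_congr rfl (fun y _ => hpt x y), Finset.sum_add_distrib, hτ.2.1 x]
        by_cases h : x = x₀
        · subst h
          simp [hμ'def, Finset.sum_ite_eq' Finset.univ y₀ (fun _ => m), hμx₀]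
        · simp [h, hμ'def, Function.update_of_ne h]
      · rw [Finset.sum_congr rfl (fun x _ => hpt x y), Finset.sum_add_distrib, hτ.2.2 y,
          Finset.sum_ite_eq' Finset.univ x₀ (fun _ => if y = y₀ then m else 0),
          if_pos (Finset.mem_univ x₀)]
        by_cases h : y = y₀
        · subst h; simp [hν'def]
        · simp [hν'def, h, Function.update_of_ne h]
    refine ⟨hrow0, hLplan, ?_⟩
    unfold tcost
    have h2 : ∀ x, ∑ y, c x y * L τ x y
        = (∑ y, c x y * τ x y) + (if x = x₀ then c x y₀ * m else 0) := by
      intro x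
      rw [Finset.sum_congr rfl (fun y _ => by rw [hpt x y, mul_add]), Finset.sum_add_distrib]
      congr 1
      by_cases h : x = x₀
      · simp [h, mul_ite, Finset.sum_ite_eq' Finset.univ y₀ (fun y => c x₀ y * m)]
      · simp [h]
    rw [Finset.sum_congr rfl (fun x _ => h2 x), Finset.sum_add_distrib,
      Finset.sum_ite_eq' Finset.univ x₀ (fun x => c x y₀ * m), if_pos (Finset.mem_univ x₀)]
  have hopt' : IsOptimal c μ' ν' π' := by
    refine ⟨hplan', fun τ hτ => ?_⟩
    obtain ⟨-, hLplan, hLcost⟩ := hLfacts τ hτ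
    have := hopt _ hLplan
    rw [hLcost] at this
    rw [hcost']
    linarith
  -- support bookkeeping
  have hspt' : spt π' = (spt π).erase (x₀, y₀) := by
    ext p
    simp only [mem_spt, Finset.mem_erase]
    constructor
    · intro hp
      have hx : p.1 ≠ x₀ := by
        intro h
        rw [hπ'def] at hp
        simp [h] at hp
      refine ⟨?_, by simpa [hπ'def, if_neg hx] using hp⟩
      intro h
      rw [h] at hx
      exact hx rfl
    · rintro ⟨hpq, hp⟩
      have hx : p.1 ≠ x₀ := by
        intro h
        have hy : p.2 ≠ y₀ := by
          intro h2
          exact hpq (Prod.ext h h2)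
        exact hp (by rw [h]; exact hleaf p.2 hy)
      simpa [hπ'def, if_neg hx] using hp
  have hcard' : (spt π').card + 1 = (spt π).card := by
    rw [hspt', Finset.card_erase_of_mem (mem_spt.mpr h0)]
    have : 0 < (spt π).card := Finset.card_pos.mpr ⟨(x₀, y₀), mem_spt.mpr h0⟩
    omega
  refine ⟨hμx₀, hle, ⟨hopt', ?_⟩, hcard'⟩
  -- trimness of π'
  intro τ hτopt
  obtain ⟨hrow0, hLplan, hLcost⟩ := hLfacts τ hτopt.1
  have hcosteq : tcost c τ = tcost c π' := le_antisymm (hτopt.2 π' hplan') (hopt'.2 τ hτopt.1)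
  have hLopt : IsOptimal c μ ν (L τ) := by
    refine ⟨hLplan, fun σ hσ => ?_⟩
    rw [hLcost, hcosteq, hcost']
    have := hopt σ hσ
    linarith
  have hcard2 := hmin _ hLopt
  have hsptL : spt (L τ) = insert (x₀, y₀) (spt τ) := by
    ext p
    simp only [mem_spt, Finset.mem_insert]
    constructor
    · intro hp
      by_cases h : p.1 = x₀
      · left
        rw [hLdef] at hp
        simp only [h, if_pos] at hp
        by_cases h2 : p.2 = y₀
        · exact Prod.ext h h2
        · simp [h2] at hp
      · right
        simpa [hLdef, if_neg h] using hp
    · rintro (h | h)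
      · rw [h, hLdef]
        simpa using ne_of_gt hmpos
      · have hx : p.1 ≠ x₀ := by
          intro h2
          apply h
          rw [h2] at h ⊢
          exact absurd (hrow0 p.2) h
        simpa [hLdef, if_neg hx] using h
  have hnotmem : (x₀, y₀) ∉ spt τ := by
    rw [mem_spt]
    simpa using (hrow0 y₀)
  have : (spt (L τ)).card = (spt τ).card + 1 := by
    rw [hsptL, Finset.card_insert_of_notMem hnotmem]
  omega

end Reduce


section Main
variable {X : Type*} [Fintype X] [DecidableEq X]

/-- Main inductive statement: the diffusive decomposition with atoms realizing
discrepancies of partial sums. -/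
def Concl (μ ν : X → ℝ) (π : X → X → ℝ) : Prop :=
  ∃ (μd μc νd νc : X → ℝ) (h₁ h₂ : X → X),
    (∀ x, 0 ≤ μd x) ∧ (∀ x, 0 ≤ μc x) ∧ (∀ y, 0 ≤ νd y) ∧ (∀ y, 0 ≤ νc y) ∧
    (∀ x, μ x = μd x + μc x) ∧ (∀ y, ν y = νd y + νc y) ∧
    (∀ x y, π x y = pushF h₁ μd x y + pushB h₂ νd x y) ∧
    (∀ a, μd a ≠ 0 → ∃ A B : Finset X, μd a = |∑ x ∈ A, μ x - ∑ y ∈ B, ν y|) ∧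
    (∀ b, νd b ≠ 0 → ∃ A B : Finset X, νd b = |∑ x ∈ A, μ x - ∑ y ∈ B, ν y|)

def tp {X : Type*} (f : X → X → ℝ) : X → X → ℝ := fun x y => f y x

lemma tcost_tp (c π : X → X → ℝ) : tcost (tp c) (tp π) = tcost c π := by
  unfold tcost tp
  exact Finset.sum_comm

lemma isPlan_tp {μ ν : X → ℝ} {π : X → X → ℝ} (h : IsPlan μ ν π) : IsPlan ν μ (tp π) :=
  ⟨fun x y => h.1 y x, fun x => h.2.2 x, fun y => h.2.1 y⟩

lemma card_spt_tp (π : X → X → ℝ) : (spt (tp π)).card = (spt π).card := by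
  classical
  refine Finset.card_bij (fun p _ => p.swap) ?_ ?_ ?_
  · intro p hp
    have h2 : tp π p.1 p.2 ≠ 0 := mem_spt.mp hp
    exact mem_spt.mpr h2
  · intro p hp q hq h
    exact Prod.swap_injective h
  · intro q hq
    refine ⟨q.swap, ?_, by simp⟩
    have h2 : π q.1 q.2 ≠ 0 := mem_spt.mp hq
    exact mem_spt.mpr h2
lemma isOptimal_tp {c : X → X → ℝ} {μ ν : X → ℝ} {π : X → X → ℝ}
    (h : IsOptimal c μ ν π) : IsOptimal (tp c) ν μ (tp π) := by
  refine ⟨isPlan_tp h.1, fun τ hτ => ?_⟩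
  have h1 : tcost (tp c) (tp π) = tcost c π := tcost_tp c π
  have h2 : tcost (tp c) τ = tcost c (tp τ) := tcost_tp c (tp τ)
  rw [h1, h2]
  exact h.2 (tp τ) (isPlan_tp hτ)

lemma isTrim_tp {c : X → X → ℝ} {μ ν : X → ℝ} {π : X → X → ℝ}
    (h : IsTrim c μ ν π) : IsTrim (tp c) ν μ (tp π) := by
  refine ⟨isOptimal_tp h.1, fun τ hτ => ?_⟩
  have hτ' : IsOptimal c μ ν (tp τ) := isOptimal_tp hτ
  have := h.2 (tp τ) hτ'
  rw [card_spt_tp π]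
  calc (spt π).card ≤ (spt (tp τ)).card := this
  _ = (spt τ).card := card_spt_tp τ

lemma concl_tp {μ ν : X → ℝ} {π : X → X → ℝ} (h : Concl ν μ (tp π)) : Concl μ ν π := by
  obtain ⟨ad, ac, bd, bc, h₁, h₂, had, hac, hbd, hbc, hsa, hsb, hdec, hA, hB⟩ := h
  refine ⟨bd, bc, ad, ac, h₂, h₁, hbd, hbc, had, hac, hsb, hsa, ?_, ?_, ?_⟩
  · intro x y
    calc π x y = pushF h₁ ad y x + pushB h₂ bd y x := hdec y x
    _ = pushF h₂ bd x y + pushB h₁ ad x y := by unfold pushF pushB; ring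
  · intro a ha
    obtain ⟨A, B, hAB⟩ := hB a ha
    exact ⟨B, A, by rw [hAB, abs_sub_comm]⟩
  · intro b hb
    obtain ⟨A, B, hAB⟩ := hA b hb
    exact ⟨B, A, by rw [hAB, abs_sub_comm]⟩

lemma pushF_nonneg (h : X → X) (σ : X → ℝ) (hσ : ∀ x, 0 ≤ σ x) (x y : X) :
    0 ≤ pushF h σ x y := by
  unfold pushF
  split
  · exact hσ x
  · exact le_refl 0
lemma pushB_nonneg (h : X → X) (σ : X → ℝ) (hσ : ∀ x, 0 ≤ σ x) (x y : X) :
    0 ≤ pushB h σ x y := by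
  unfold pushB
  split
  · exact hσ y
  · exact le_refl 0

lemma exists_kernel {X : Type*} [Fintype X] [DecidableEq X] (π : X → X → ℝ)
    (hne : (spt π).Nonempty)
    (hrow : ∀ x y, π x y ≠ 0 → ∃ y', y' ≠ y ∧ π x y' ≠ 0)
    (hcol : ∀ x y, π x y ≠ 0 → ∃ x', x' ≠ x ∧ π x' y ≠ 0) :
    ∃ δ : X → X → ℝ, (∃ p : X × X, δ p.1 p.2 ≠ 0) ∧
      (∀ x y, δ x y ≠ 0 → π x y ≠ 0) ∧
      (∀ x, ∑ y, δ x y = 0) ∧ (∀ y, ∑ x, δ x y = 0) := by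
  classical
  set S := spt π with hS
  set R := S.image Prod.fst with hRdef
  set C := S.image Prod.snd with hCdef
  have hfibR : ∀ a ∈ R, 2 ≤ (S.filter fun p => p.1 = a).card := by
    intro a ha
    obtain ⟨p, hp, rfl⟩ := Finset.mem_image.mp ha
    obtain ⟨y', hy', hπ'⟩ := hrow p.1 p.2 (mem_spt.mp hp)
    have h1 : p ∈ S.filter fun q => q.1 = p.1 := Finset.mem_filter.mpr ⟨hp, rfl⟩
    have h2 : (p.1, y') ∈ S.filter fun q => q.1 = p.1 :=
      Finset.mem_filter.mpr ⟨mem_spt.mpr hπ', rfl⟩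
    have hne2 : p ≠ (p.1, y') := by
      intro h
      exact hy' (congrArg Prod.snd h).symm
    exact Finset.one_lt_card.mpr ⟨p, h1, (p.1, y'), h2, hne2⟩
  have hfibC : ∀ b ∈ C, 2 ≤ (S.filter fun p => p.2 = b).card := by
    intro b hb
    obtain ⟨p, hp, rfl⟩ := Finset.mem_image.mp hb
    obtain ⟨x', hx', hπ'⟩ := hcol p.1 p.2 (mem_spt.mp hp)
    have h1 : p ∈ S.filter fun q => q.2 = p.2 := Finset.mem_filter.mpr ⟨hp, rfl⟩
    have h2 : (x', p.2) ∈ S.filter fun q => q.2 = p.2 :=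
      Finset.mem_filter.mpr ⟨mem_spt.mpr hπ', rfl⟩
    have hne2 : p ≠ (x', p.2) := by
      intro h
      exact hx' (congrArg Prod.fst h).symm
    exact Finset.one_lt_card.mpr ⟨p, h1, (x', p.2), h2, hne2⟩
  have hcardR : 2 * R.card ≤ S.card := by
    have h1 : S.card = ∑ a ∈ R, (S.filter fun p => p.1 = a).card :=
      Finset.card_eq_sum_card_fiberwise (fun p hp => Finset.mem_image_of_mem _ hp)
    calc 2 * R.card = ∑ _a ∈ R, 2 := by simp [mul_comm]
    _ ≤ ∑ a ∈ R, (S.filter fun p => p.1 = a).card := Finset.sum_le_sum hfibR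
    _ = S.card := h1.symm
  have hcardC : 2 * C.card ≤ S.card := by
    have h1 : S.card = ∑ b ∈ C, (S.filter fun p => p.2 = b).card :=
      Finset.card_eq_sum_card_fiberwise (fun p hp => Finset.mem_image_of_mem _ hp)
    calc 2 * C.card = ∑ _b ∈ C, 2 := by simp [mul_comm]
    _ ≤ ∑ b ∈ C, (S.filter fun p => p.2 = b).card := Finset.sum_le_sum hfibC
    _ = S.card := h1.symm
  -- extension operator
  set e : (↥S → ℝ) → X × X → ℝ := fun δ p => if h : p ∈ S then δ ⟨p, h⟩ else 0 with he
  have he_supp : ∀ δ (p : X × X), e δ p ≠ 0 → p ∈ S := by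
    intro δ p h
    by_contra hp
    simp [he, hp] at h
  have hrow_vanish : ∀ (δ : ↥S → ℝ) (x : X), x ∉ R → ∑ y, e δ (x, y) = 0 := by
    intro δ x hx
    refine Finset.sum_eq_zero fun y _ => ?_
    by_contra h
    exact hx (Finset.mem_image.mpr ⟨(x, y), he_supp δ _ h, rfl⟩)
  have hcol_vanish : ∀ (δ : ↥S → ℝ) (y : X), y ∉ C → ∑ x, e δ (x, y) = 0 := by
    intro δ y hy
    refine Finset.sum_eq_zero fun x _ => ?_
    by_contra h
    exact hy (Finset.mem_image.mpr ⟨(x, y), he_supp δ _ h, rfl⟩)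
  set T : (↥S → ℝ) →ₗ[ℝ] (↥R → ℝ) × (↥C → ℝ) :=
    { toFun := fun δ => (fun x => ∑ y, e δ (↑x, y), fun y => ∑ x, e δ (x, ↑y))
      map_add' := by
        intro δ δ'
        have : ∀ p, e (δ + δ') p = e δ p + e δ' p := by
          intro p; by_cases h : p ∈ S <;> simp [he, h]
        ext w <;> simp [this, Finset.sum_add_distrib]
      map_smul' := by
        intro r δ
        have : ∀ p, e (r • δ) p = r * e δ p := by
          intro p; by_cases h : p ∈ S <;> simp [he, h]
        ext w <;> simp [this, Finset.mul_sum] } with hT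
  have hrow_total : ∀ δ : ↥S → ℝ, ∑ x : ↥R, ∑ y, e δ (↑x, y) = ∑ x, ∑ y, e δ (x, y) := by
    intro δ
    rw [Finset.sum_coe_sort R (fun x => ∑ y, e δ (x, y))]
    exact Finset.sum_subset (Finset.subset_univ R) (fun x _ hx => hrow_vanish δ x hx)
  have hcol_total : ∀ δ : ↥S → ℝ, ∑ y : ↥C, ∑ x, e δ (x, ↑y) = ∑ x, ∑ y, e δ (x, y) := by
    intro δ
    rw [Finset.sum_coe_sort C (fun y => ∑ x, e δ (x, y)),
      show (∑ x, ∑ y, e δ (x, y)) = ∑ y, ∑ x, e δ (x, y) from Finset.sum_comm]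
    exact Finset.sum_subset (Finset.subset_univ C) (fun y _ hy => hcol_vanish δ y hy)
  set ℓ : ((↥R → ℝ) × (↥C → ℝ)) →ₗ[ℝ] ℝ :=
    { toFun := fun w => (∑ x, w.1 x) - (∑ y, w.2 y)
      map_add' := by
        intro a b
        simp [Finset.sum_add_distrib]
        ring
      map_smul' := by
        intro r a
        simp [Finset.mul_sum]
        rw [mul_sub, Finset.mul_sum, Finset.mul_sum] } with hℓ
  have hTker : ∀ δ, T δ ∈ LinearMap.ker ℓ := by
    intro δ
    simp only [LinearMap.mem_ker, hℓ, hT, LinearMap.coe_mk, AddHom.coe_mk]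
    rw [hrow_total δ, hcol_total δ]
    ring
  -- ℓ surjective
  obtain ⟨p0, hp0⟩ := hne
  have hx0 : p0.1 ∈ R := Finset.mem_image_of_mem _ hp0
  have hRne : Nonempty ↥R := ⟨⟨p0.1, hx0⟩⟩
  have hℓsurj : Function.Surjective ℓ := by
    intro r
    refine ⟨(Pi.single (⟨p0.1, hx0⟩ : ↥R) r, 0), ?_⟩
    simp [hℓ]
  have hrange : LinearMap.range ℓ = ⊤ := LinearMap.range_eq_top.mpr hℓsurj
  have hfr : Module.finrank ℝ ↥(LinearMap.range ℓ) = 1 := by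
    rw [hrange, finrank_top, Module.finrank_self]
  have hkerℓ : 1 + Module.finrank ℝ ↥(LinearMap.ker ℓ) = R.card + C.card := by
    have := LinearMap.finrank_range_add_finrank_ker ℓ
    rw [hfr] at this
    rw [this]
    simp [Module.finrank_fintype_fun_eq_card]
  set T' := T.codRestrict (LinearMap.ker ℓ) hTker with hT'
  have hrank := LinearMap.finrank_range_add_finrank_ker T'
  have hdomS : Module.finrank ℝ (↥S → ℝ) = S.card := by
    simp [Module.finrank_fintype_fun_eq_card]
  rw [hdomS] at hrank
  have hrle : Module.finrank ℝ ↥(LinearMap.range T') ≤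
      Module.finrank ℝ ↥(LinearMap.ker ℓ) := Submodule.finrank_le _
  have hkerT' : LinearMap.ker T' = LinearMap.ker T := LinearMap.ker_codRestrict _ _ _
  have hkerpos : 0 < Module.finrank ℝ ↥(LinearMap.ker T) := by
    rw [← hkerT']
    omega
  have hne_bot : LinearMap.ker T ≠ ⊥ := by
    intro h
    rw [h] at hkerpos
    simp [finrank_bot] at hkerpos
  obtain ⟨δ, hδker, hδne⟩ := (Submodule.ne_bot_iff _).mp hne_bot
  have hTδ : T δ = 0 := LinearMap.mem_ker.mp hδker
  refine ⟨fun x y => e δ (x, y), ?_, ?_, ?_, ?_⟩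
  · obtain ⟨q, hq⟩ := Function.ne_iff.mp hδne
    refine ⟨(q : X × X), ?_⟩
    have : e δ (q : X × X) = δ q := by
      simp [he, q.2]
    simpa [this] using hq
  · intro x y h
    exact mem_spt.mp (he_supp δ (x, y) h)
  · intro x
    by_cases hx : x ∈ R
    · have := congrFun (congrArg Prod.fst hTδ) ⟨x, hx⟩
      simpa [hT] using this
    · exact hrow_vanish δ x hx
  · intro y
    by_cases hy : y ∈ C
    · have := congrFun (congrArg Prod.snd hTδ) ⟨y, hy⟩
      simpa [hT] using this
    · exact hcol_vanish δ y hy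

lemma exists_leaf {c : X → X → ℝ} {μ ν : X → ℝ} {π : X → X → ℝ}
    (htrim : IsTrim c μ ν π) (hSne : (spt π).Nonempty) :
    (∃ x₀ y₀, π x₀ y₀ ≠ 0 ∧ ∀ y, y ≠ y₀ → π x₀ y = 0) ∨
    (∃ x₀ y₀, π x₀ y₀ ≠ 0 ∧ ∀ x, x ≠ x₀ → π x y₀ = 0) := by
  by_contra hno
  push_neg at hno
  obtain ⟨h1, h2⟩ := hno
  obtain ⟨δ, hδ0, hδsupp, hδr, hδc⟩ := exists_kernel π hSne
    (fun x y hxy => h1 x y hxy) (fun x y hxy => h2 x y hxy)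
  exact no_kernel_of_trim htrim δ hδ0 hδsupp hδr hδc

lemma step_row (c : X → X → ℝ) (μ ν : X → ℝ) (π : X → X → ℝ)
    (hμ : ∀ x, 0 ≤ μ x) (hν : ∀ y, 0 ≤ ν y) (htrim : IsTrim c μ ν π)
    (x₀ y₀ : X) (h0 : π x₀ y₀ ≠ 0) (hleaf : ∀ y, y ≠ y₀ → π x₀ y = 0)
    (IH : ∀ (c' : X → X → ℝ) (μ' ν' : X → ℝ) (π' : X → X → ℝ),
      (spt π').card < (spt π).card → (∀ x, 0 ≤ μ' x) → (∀ y, 0 ≤ ν' y) →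
      IsTrim c' μ' ν' π' → Concl μ' ν' π') :
    Concl μ ν π := by
  classical
  obtain ⟨hμx₀, hle, htrim', hcard'⟩ := reduce_row htrim x₀ y₀ h0 hleaf
  set m := π x₀ y₀ with hm
  have hmpos : 0 < m := lt_of_le_of_ne (htrim.1.1.1 x₀ y₀) (Ne.symm h0)
  set μ' := Function.update μ x₀ 0 with hμ'def
  set ν' := Function.update ν y₀ (ν y₀ - m) with hν'def
  set π' : X → X → ℝ := fun x y => if x = x₀ then 0 else π x y with hπ'def
  have hμ'nn : ∀ x, 0 ≤ μ' x := by
    intro x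
    by_cases h : x = x₀
    · subst h; rw [hμ'def, Function.update_self]
    · rw [hμ'def, Function.update_of_ne h]; exact hμ x
  have hν'nn : ∀ y, 0 ≤ ν' y := by
    intro y
    by_cases h : y = y₀
    · subst h; rw [hν'def, Function.update_self]; linarith
    · rw [hν'def, Function.update_of_ne h]; exact hν y
  have hcon' := IH c μ' ν' π' (by omega) hμ'nn hν'nn htrim'
  obtain ⟨μd', μc', νd', νc', h₁', h₂', hd1, hd2, hd3, hd4, hs1, hs2, hdec, hA, hB⟩ := hcon'
  -- the pushB part vanishes on the removed row
  have hrow0 : ∀ y, pushB h₂' νd' x₀ y = 0 := by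
    intro y
    have h1 : π' x₀ y = 0 := by rw [hπ'def]; simp
    have h2 := hdec x₀ y
    have h3 : 0 ≤ pushF h₁' μd' x₀ y := pushF_nonneg _ _ hd1 _ _
    have h4 : 0 ≤ pushB h₂' νd' x₀ y := pushB_nonneg _ _ hd3 _ _
    rw [h1] at h2
    linarith
  -- conversion of discrepancy sets
  have hconv : ∀ A B : Finset X, ∃ A' B' : Finset X,
      ∑ x ∈ A, μ' x - ∑ y ∈ B, ν' y = ∑ x ∈ A', μ x - ∑ y ∈ B', ν y := by
    intro A B
    have hA' : ∑ x ∈ A, μ' x = ∑ x ∈ A.erase x₀, μ x := by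
      have hcong : ∀ x ∈ A.erase x₀, μ' x = μ x := by
        intro x hx
        exact Function.update_of_ne (Finset.ne_of_mem_erase hx) _ _
      by_cases hx₀A : x₀ ∈ A
      · rw [← Finset.add_sum_erase A μ' hx₀A, hμ'def, Function.update_self, zero_add,
          ← hμ'def]
        exact Finset.sum_congr rfl hcong
      · rw [Finset.erase_eq_of_notMem hx₀A]
        refine Finset.sum_congr rfl fun x hx => ?_
        exact Function.update_of_ne (fun h => hx₀A (by rw [← h]; exact hx)) _ _
    by_cases hy₀B : y₀ ∈ B
    · refine ⟨insert x₀ (A.erase x₀), B, ?_⟩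
      have hB' : ∑ y ∈ B, ν' y = ∑ y ∈ B, ν y - m := by
        rw [← Finset.add_sum_erase B ν' hy₀B, ← Finset.add_sum_erase B ν hy₀B,
          hν'def, Function.update_self, ← hν'def]
        have : ∑ y ∈ B.erase y₀, ν' y = ∑ y ∈ B.erase y₀, ν y :=
          Finset.sum_congr rfl fun y hy =>
            Function.update_of_ne (Finset.ne_of_mem_erase hy) _ _
        rw [this]
        ring
      rw [hA', hB', Finset.sum_insert (Finset.notMem_erase _ _), hμx₀]
      ring
    · refine ⟨A.erase x₀, B, ?_⟩
      have hB' : ∑ y ∈ B, ν' y = ∑ y ∈ B, ν y :=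
        Finset.sum_congr rfl fun y hy =>
          Function.update_of_ne (fun h => hy₀B (by rw [← h]; exact hy)) _ _
      rw [hA', hB']
  refine ⟨Function.update μd' x₀ m, Function.update μc' x₀ 0, νd',
    Function.update νc' y₀ (νc' y₀ + m), Function.update h₁' x₀ y₀, h₂',
    ?_, ?_, hd3, ?_, ?_, ?_, ?_, ?_, ?_⟩
  · intro x
    by_cases h : x = x₀
    · subst h; rw [Function.update_self]; exact hmpos.le
    · rw [Function.update_of_ne h]; exact hd1 x
  · intro x
    by_cases h : x = x₀
    · subst h; rw [Function.update_self]
    · rw [Function.update_of_ne h]; exact hd2 x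
  · intro y
    by_cases h : y = y₀
    · rw [h, Function.update_self]
      have := hd4 y₀
      linarith
    · rw [Function.update_of_ne h]; exact hd4 y
  · intro x
    by_cases h : x = x₀
    · rw [h, Function.update_self, Function.update_self, hμx₀, add_zero]
    · rw [Function.update_of_ne h, Function.update_of_ne h]
      have := hs1 x
      rwa [hμ'def, Function.update_of_ne h] at this
  · intro y
    by_cases h : y = y₀
    · rw [h, Function.update_self]
      have := hs2 y₀
      rw [hν'def, Function.update_self] at this
      linarith
    · rw [Function.update_of_ne h]
      have := hs2 y
      rwa [hν'def, Function.update_of_ne h] at this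
  · intro x y
    by_cases hx : x = x₀
    · rw [hx]
      have hpB : pushB h₂' νd' x₀ y = 0 := hrow0 y
      unfold pushF pushB at hpB ⊢
      rw [Function.update_self, Function.update_self]
      by_cases hy : y = y₀
      · subst hy
        rw [if_pos rfl, hpB, add_zero]
      · rw [if_neg (fun h => hy h.symm), hpB, add_zero, hleaf y hy]
    · have h2 := hdec x y
      rw [hπ'def] at h2
      simp only [if_neg hx] at h2
      rw [h2]
      unfold pushF pushB
      rw [Function.update_of_ne hx, Function.update_of_ne hx]
  · intro a ha
    by_cases hax : a = x₀
    · rw [hax] at ha ⊢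
      refine ⟨{x₀}, ∅, ?_⟩
      rw [Function.update_self, Finset.sum_singleton, Finset.sum_empty, sub_zero, hμx₀,
        abs_of_pos hmpos]
    · rw [Function.update_of_ne hax] at ha ⊢
      obtain ⟨A, B, hAB⟩ := hA a ha
      obtain ⟨A', B', hconv'⟩ := hconv A B
      exact ⟨A', B', by rw [hAB, hconv']⟩
  · intro b hb
    obtain ⟨A, B, hAB⟩ := hB b hb
    obtain ⟨A', B', hconv'⟩ := hconv A B
    exact ⟨A', B', by rw [hAB, hconv']⟩

lemma main_aux : ∀ (n : ℕ) (c : X → X → ℝ) (μ ν : X → ℝ) (π : X → X → ℝ),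
    (spt π).card = n → (∀ x, 0 ≤ μ x) → (∀ y, 0 ≤ ν y) → IsTrim c μ ν π →
    Concl μ ν π := by
  intro n
  induction n using Nat.strong_induction_on with
  | _ n IH =>
    intro c μ ν π hn hμ hν htrim
    by_cases hS : (spt π).Nonempty
    · rcases exists_leaf htrim hS with ⟨x₀, y₀, h0, hleaf⟩ | ⟨x₀, y₀, h0, hleaf⟩
      · refine step_row c μ ν π hμ hν htrim x₀ y₀ h0 hleaf ?_
        intro c' μ' ν' π' hlt hμ' hν' htrim'
        exact IH (spt π').card (by omega) c' μ' ν' π' rfl hμ' hν' htrim'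
      · refine concl_tp (step_row (tp c) ν μ (tp π) hν hμ (isTrim_tp htrim) y₀ x₀ h0
          (fun x hx => hleaf x hx) ?_)
        intro c' μ' ν' π' hlt hμ' hν' htrim'
        rw [card_spt_tp π] at hlt
        exact IH (spt π').card (by omega) c' μ' ν' π' rfl hμ' hν' htrim'
    · have hπ0 : ∀ x y, π x y = 0 := by
        intro x y
        by_contra h
        exact hS ⟨(x, y), mem_spt.mpr h⟩
      refine ⟨0, μ, 0, ν, id, id, fun x => le_refl 0, hμ, fun y => le_refl 0, hν,
        fun x => by simp, fun y => by simp, fun x y => by simp [hπ0 x y, pushF, pushB],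
        fun a ha => absurd rfl ha, fun b hb => absurd rfl hb⟩

end Main

/-- for any trim plan there is a diffusive model whose diffusive atoms are
all bounded below by the minimal nonzero discrepancy of partial sums of `μ` and `ν`. -/
theorem exists_diffusive_model_uniform_bound {X : Type*} [Fintype X] [DecidableEq X]
    (μ ν : X → ℝ) (c : X → X → ℝ) (π : X → X → ℝ)
    (hμpos : ∀ x, 0 < μ x) (hνpos : ∀ y, 0 < ν y)
    (hmass : ∑ x, μ x = ∑ y, ν y)
    (hc : ∀ x y, 0 ≤ c x y)
    (htrim : IsTrim c μ ν π) :
    ∃ (μd μc νd νc : X → ℝ) (h₁ h₂ : X → X),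
      (∀ x, 0 ≤ μd x) ∧ (∀ x, 0 ≤ μc x) ∧ (∀ y, 0 ≤ νd y) ∧ (∀ y, 0 ≤ νc y) ∧
      (∀ x, μ x = μd x + μc x) ∧ (∀ y, ν y = νd y + νc y) ∧
      (∀ x y, π x y = pushF h₁ μd x y + pushB h₂ νd x y) ∧
      (∀ a, μd a ≠ 0 →
        sInf {r | ∃ A B : Finset X,
          r = |∑ x ∈ A, μ x - ∑ y ∈ B, ν y| ∧ 0 < r} ≤ μd a) ∧
      (∀ b, νd b ≠ 0 →
        sInf {r | ∃ A B : Finset X,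
          r = |∑ x ∈ A, μ x - ∑ y ∈ B, ν y| ∧ 0 < r} ≤ νd b) := by
  
  classical
  have hconcl : Concl μ ν π :=
    main_aux (spt π).card c μ ν π rfl (fun x => (hμpos x).le) (fun y => (hνpos y).le) htrim
  obtain ⟨μd, μc, νd, νc, h₁, h₂, a1, a2, a3, a4, a5, a6, a7, a8, a9⟩ := hconcl
  refine ⟨μd, μc, νd, νc, h₁, h₂, a1, a2, a3, a4, a5, a6, a7, ?_, ?_⟩
  · intro a ha
    obtain ⟨A, B, hAB⟩ := a8 a ha
    refine csInf_le ⟨0, fun r hr => ?_⟩ ⟨A, B, hAB, lt_of_le_of_ne (a1 a) (Ne.symm ha)⟩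
    obtain ⟨A', B', h1, h2⟩ := hr
    exact h2.le
  · intro b hb
    obtain ⟨A, B, hAB⟩ := a9 b hb
    refine csInf_le ⟨0, fun r hr => ?_⟩ ⟨A, B, hAB, lt_of_le_of_ne (a3 b) (Ne.symm hb)⟩
    obtain ⟨A', B', h1, h2⟩ := hr
    exact h2.le
end

section
/- Let μ = (1/2)δ_0 + (1/2)δ_1 and ν_ε = ((1−ε)/2)δ_0 + ((1+ε)/2)δ_1 on ℝ, with ε ∈ (0,1), and cost c₂(x,y) = |x−y|². Then W^{(∞)}_2(μ,ν_ε) = 1 and W₂²(μ,ν_ε) = ε/2. Consequently, for any constant C > 0 there exists ε ∈ (0,1) with (W^{(∞)}(μ,ν_ε))³ > C · W₂²(μ,ν_ε), so no estimate of the form (W^{(∞)})^{p+n} ≤ C·W_p^p with C independent of ν holds in the discrete setting. -/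
open Finset

namespace DiscAux

noncomputable def cc : Fin 2 → Fin 2 → ℝ := fun i j => |(i.val : ℝ) - (j.val : ℝ)|
noncomputable def mu : Fin 2 → ℝ := fun _ => 1/2
noncomputable def nu (ε : ℝ) : Fin 2 → ℝ := fun j => if j = 0 then (1 - ε)/2 else (1 + ε)/2

noncomputable def pi0 (ε : ℝ) : Fin 2 → Fin 2 → ℝ :=
  fun i j => if i = 0 then (if j = 0 then (1-ε)/2 else ε/2) else (if j = 0 then 0 else 1/2)

lemma plan_pi0 {ε : ℝ} (h0 : 0 < ε) (h1 : ε < 1) : IsPlan mu (nu ε) (pi0 ε) := by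
  refine ⟨?_, ?_, ?_⟩
  · intro x y; fin_cases x <;> fin_cases y <;> simp [pi0] <;> linarith
  · intro x; fin_cases x <;> simp [Fin.sum_univ_two, pi0, mu] <;> ring
  · intro y; fin_cases y <;> simp [Fin.sum_univ_two, pi0, nu] <;> ring

lemma plan_facts {ε : ℝ} {π : Fin 2 → Fin 2 → ℝ} (hπ : IsPlan mu (nu ε) π) :
    ε/2 ≤ π 0 1 := by
  obtain ⟨hpos, hrow, hcol⟩ := hπ
  have h1 := hrow 1
  have h2 := hcol 1
  simp [Fin.sum_univ_two, mu, nu] at h1 h2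
  have := hpos 1 0
  linarith

lemma tcost_eq {ε : ℝ} {π : Fin 2 → Fin 2 → ℝ} (hπ : IsPlan mu (nu ε) π) :
    tcost (fun i j => cc i j ^ 2) π = π 0 1 + π 1 0 := by
  simp [tcost, Fin.sum_univ_two, cc]

lemma linf_eq {ε : ℝ} (h0 : 0 < ε) {π : Fin 2 → Fin 2 → ℝ} (hπ : IsPlan mu (nu ε) π) :
    linf cc π = 1 := by
  have h01 : ε/2 ≤ π 0 1 := plan_facts hπ
  have hne : π 0 1 ≠ 0 := by intro h; rw [h] at h01; linarith
  have hmem : ((0 : Fin 2), (1 : Fin 2)) ∈ spt π := by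
    simp [spt, hne]
  set s : Finset ℝ := (spt π).image (fun p => cc p.1 p.2) with hs
  have h1s : (1 : ℝ) ∈ s := by
    refine Finset.mem_image.2 ⟨(0,1), hmem, ?_⟩
    simp [cc]
  have hsne : s.Nonempty := ⟨1, h1s⟩
  have hub : ∀ r ∈ s, r ≤ 1 := by
    intro r hr
    obtain ⟨⟨i, j⟩, _, rfl⟩ := Finset.mem_image.1 hr
    fin_cases i <;> fin_cases j <;> simp [cc] <;> norm_num
  have hmax : s.max' hsne = 1 :=
    le_antisymm (Finset.max'_le _ _ _ hub) (Finset.le_max' _ _ h1s)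
  have : s.max = (1 : ℝ) := by rw [← Finset.coe_max' hsne, hmax]
  simp [linf, ← hs, this]

lemma Winf_eq {ε : ℝ} (h0 : 0 < ε) (h1 : ε < 1) : Winf cc mu (nu ε) = 1 := by
  have hL : IsLeast {r | ∃ π, IsPlan mu (nu ε) π ∧ linf cc π = r} 1 := by
    constructor
    · exact ⟨pi0 ε, plan_pi0 h0 h1, linf_eq h0 (plan_pi0 h0 h1)⟩
    · rintro r ⟨π, hπ, rfl⟩
      rw [linf_eq h0 hπ]
  exact hL.csInf_eq

lemma Wc_eq {ε : ℝ} (h0 : 0 < ε) (h1 : ε < 1) :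
    Wc (fun i j => cc i j ^ 2) mu (nu ε) = ε / 2 := by
  have hL : IsLeast {r | ∃ π, IsPlan mu (nu ε) π ∧ tcost (fun i j => cc i j ^ 2) π = r}
      (ε / 2) := by
    constructor
    · refine ⟨pi0 ε, plan_pi0 h0 h1, ?_⟩
      rw [tcost_eq (plan_pi0 h0 h1)]
      simp [pi0]
    · rintro r ⟨π, hπ, rfl⟩
      rw [tcost_eq hπ]
      have := plan_facts hπ
      have := hπ.1 1 0
      linarith
  exact hL.csInf_eq

end DiscAux

/-- for `μ = (δ₀ + δ₁)/2` and `ν_ε = ((1-ε)δ₀ + (1+ε)δ₁)/2` on `{0,1} ⊂ ℝ`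
with quadratic cost, `W^{(∞)} = 1` while `W₂² = ε/2`; hence no bound
`(W^{(∞)})³ ≤ C·W₂²` with `C` independent of `ν` can hold. -/


theorem no_uniform_discrete_bound :
    letI X := Fin 2
    letI c : X → X → ℝ := fun i j => |(i.val : ℝ) - (j.val : ℝ)|
    letI μ : X → ℝ := fun _ => 1/2
    letI ν : ℝ → X → ℝ := fun ε j => if j = 0 then (1 - ε)/2 else (1 + ε)/2
    (∀ ε ∈ Set.Ioo (0:ℝ) 1,
      Winf c μ (ν ε) = 1 ∧ Wc (fun i j => c i j ^ 2) μ (ν ε) = ε / 2) ∧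
    (∀ C : ℝ, 0 < C → ∃ ε ∈ Set.Ioo (0:ℝ) 1,
      (Winf c μ (ν ε)) ^ 3 > C * Wc (fun i j => c i j ^ 2) μ (ν ε)) := by
  show (∀ ε ∈ Set.Ioo (0:ℝ) 1,
      Winf DiscAux.cc DiscAux.mu (DiscAux.nu ε) = 1 ∧
      Wc (fun i j => DiscAux.cc i j ^ 2) DiscAux.mu (DiscAux.nu ε) = ε / 2) ∧
    (∀ C : ℝ, 0 < C → ∃ ε ∈ Set.Ioo (0:ℝ) 1,
      (Winf DiscAux.cc DiscAux.mu (DiscAux.nu ε)) ^ 3 >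
        C * Wc (fun i j => DiscAux.cc i j ^ 2) DiscAux.mu (DiscAux.nu ε))
  refine ⟨fun ε hε => ⟨DiscAux.Winf_eq hε.1 hε.2, DiscAux.Wc_eq hε.1 hε.2⟩, ?_⟩
  intro C hC
  refine ⟨min (1/2) (1/C), ⟨lt_min (by norm_num) (by positivity), lt_of_le_of_lt (min_le_left _ _) (by norm_num)⟩, ?_⟩
  have h0 : (0:ℝ) < min (1/2) (1/C) := lt_min (by norm_num) (by positivity)
  have h1 : min (1/2) (1/C) < 1 := lt_of_le_of_lt (min_le_left _ _) (by norm_num)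
  rw [DiscAux.Winf_eq h0 h1, DiscAux.Wc_eq h0 h1]
  have hle : min (1/2) (1/C) ≤ 1/C := min_le_right _ _
  have : C * (min (1/2) (1/C) / 2) ≤ C * (1/C / 2) := by
    apply mul_le_mul_of_nonneg_left (by linarith) hC.le
  have hCC : C * (1/C / 2) = 1/2 := by field_simp
  rw [one_pow]
  linarith
end

section
/- Let μ = (1/2)δ_{(0,0)} + (1/2)δ_{(1,1)} and ν = (1/4)δ_{(−1,1)} + (3/4)δ_{(1,0)} on ℝ² with Euclidean distance cost. Then the plan π = (1/4)δ_{((0,0),(−1,1))} + (1/4)δ_{((0,0),(1,0))} + (1/2)δ_{((1,1),(1,0))} is a trim optimal plan between μ and ν, and it admits at least two distinct diffusive models (i.e., the diffusive-model decomposition of a trim plan need not be unique). -/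
open Finset

/-- The cost function of the example. -/
noncomputable def cc : Fin 4 → Fin 4 → ℝ := fun i j =>
  Real.sqrt ((![0,1,-1,1] i - ![0,1,-1,1] j)^2 + (![(0:ℝ),1,1,0] i - ![(0:ℝ),1,1,0] j)^2)

/-- The candidate plan of the example. -/
noncomputable def pp : Fin 4 → Fin 4 → ℝ := fun i j =>
  if i = 0 ∧ j = 2 then 1/4 else if i = 0 ∧ j = 3 then 1/4 else
    if i = 1 ∧ j = 3 then 1/2 else 0

lemma fv0 : ((0:Fin 4):ℕ) = 0 := rfl
lemma fv1 : ((1:Fin 4):ℕ) = 1 := rfl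
lemma fv2 : ((2:Fin 4):ℕ) = 2 := rfl
lemma fv3 : ((3:Fin 4):ℕ) = 3 := rfl

lemma plan_char (p : Fin 4 → Fin 4 → ℝ)
    (h : IsPlan ![1/2,1/2,0,0] ![0,0,1/4,3/4] p) :
    p 2 0 = 0 ∧ p 2 1 = 0 ∧ p 2 2 = 0 ∧ p 2 3 = 0 ∧
    p 3 0 = 0 ∧ p 3 1 = 0 ∧ p 3 2 = 0 ∧ p 3 3 = 0 ∧
    p 0 0 = 0 ∧ p 0 1 = 0 ∧ p 1 0 = 0 ∧ p 1 1 = 0 ∧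
    p 0 3 = 1/2 - p 0 2 ∧ p 1 2 = 1/4 - p 0 2 ∧ p 1 3 = 1/4 + p 0 2 ∧
    0 ≤ p 0 2 ∧ p 0 2 ≤ 1/4 := by
  obtain ⟨hpos, hr, hc⟩ := h
  have hr0 := hr 0; have hr1 := hr 1; have hr2 := hr 2; have hr3 := hr 3
  have hc0 := hc 0; have hc1 := hc 1; have hc2 := hc 2; have hc3 := hc 3
  simp [Fin.sum_univ_four] at hr0 hr1 hr2 hr3 hc0 hc1 hc2 hc3
  refine ⟨?_,?_,?_,?_,?_,?_,?_,?_,?_,?_,?_,?_,?_,?_,?_,?_,?_⟩ <;>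
    linarith [hpos 0 0, hpos 0 1, hpos 0 2, hpos 0 3, hpos 1 0, hpos 1 1, hpos 1 2,
      hpos 1 3, hpos 2 0, hpos 2 1, hpos 2 2, hpos 2 3, hpos 3 0, hpos 3 1, hpos 3 2,
      hpos 3 3]

lemma tcost_eq (p : Fin 4 → Fin 4 → ℝ)
    (h : IsPlan ![1/2,1/2,0,0] ![0,0,1/4,3/4] p) :
    tcost cc p = (Real.sqrt 2 - 2) * p 0 2 + 5/4 := by
  obtain ⟨z20, z21, z22, z23, z30, z31, z32, z33, z00, z01, z10, z11, e03, e12, e13,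
    hge, hle⟩ := plan_char p h
  have c02 : cc 0 2 = Real.sqrt 2 := by norm_num [cc, Matrix.cons_val_two]
  have c03 : cc 0 3 = 1 := by norm_num [cc, Matrix.cons_val_three]
  have c12 : cc 1 2 = 2 := by
    have : ((![(0:ℝ),1,-1,1] 1 - ![(0:ℝ),1,-1,1] 2)^2 +
        (![(0:ℝ),1,1,0] 1 - ![(0:ℝ),1,1,0] 2)^2) = 2^2 := by norm_num [Matrix.cons_val_two]
    rw [cc, this, Real.sqrt_sq (by norm_num)]
  have c13 : cc 1 3 = 1 := by norm_num [cc, Matrix.cons_val_three]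
  simp only [tcost, Fin.sum_univ_four, z20, z21, z22, z23, z30, z31, z32, z33,
    z00, z01, z10, z11, e03, e12, e13, c02, c03, c12, c13, mul_zero]
  ring

lemma pp_plan : IsPlan ![1/2,1/2,0,0] ![0,0,1/4,3/4] pp := by
  refine ⟨?_, ?_, ?_⟩
  · intro x y; fin_cases x <;> fin_cases y <;> norm_num [pp, Fin.ext_iff, fv0, fv1, fv2, fv3]
  · intro x; fin_cases x <;> norm_num [Fin.sum_univ_four, pp, Fin.ext_iff, fv0, fv1, fv2, fv3]
  · intro y; fin_cases y <;> simp [Fin.sum_univ_four, pp] <;> norm_num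

lemma sqrt2_lt_two : Real.sqrt 2 < 2 := by
  nlinarith [Real.sq_sqrt (by norm_num : (2:ℝ) ≥ 0), Real.sqrt_nonneg 2]

lemma pp_optimal : IsOptimal cc ![1/2,1/2,0,0] ![0,0,1/4,3/4] pp := by
  refine ⟨pp_plan, ?_⟩
  intro p hp
  rw [tcost_eq pp pp_plan, tcost_eq p hp]
  have hpp : pp 0 2 = 1/4 := by norm_num [pp, Fin.ext_iff, fv0, fv1, fv2, fv3]
  obtain ⟨-,-,-,-,-,-,-,-,-,-,-,-,-,-,-, hge, hle⟩ := plan_char p hp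
  rw [hpp]
  nlinarith [sqrt2_lt_two]

lemma opt_unique (p : Fin 4 → Fin 4 → ℝ)
    (h : IsOptimal cc ![1/2,1/2,0,0] ![0,0,1/4,3/4] p) : p = pp := by
  obtain ⟨hp, hopt⟩ := h
  have h1 := hopt pp pp_plan
  have h2 := pp_optimal.2 p hp
  have heq : tcost cc p = tcost cc pp := le_antisymm h1 h2
  rw [tcost_eq p hp, tcost_eq pp pp_plan] at heq
  have hpp : pp 0 2 = 1/4 := by norm_num [pp, Fin.ext_iff, fv0, fv1, fv2, fv3]
  rw [hpp] at heq
  have ha : p 0 2 = 1/4 := by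
    have hs := sqrt2_lt_two
    have : (Real.sqrt 2 - 2) * (p 0 2 - 1/4) = 0 := by linarith
    rcases mul_eq_zero.1 this with h | h
    · linarith
    · linarith
  obtain ⟨z20, z21, z22, z23, z30, z31, z32, z33, z00, z01, z10, z11, e03, e12, e13,
    -, -⟩ := plan_char p hp
  funext x y
  fin_cases x <;> fin_cases y <;> simp [pp, Fin.ext_iff, fv0, fv1, fv2, fv3] <;> linarith

/-- a trim plan between
`μ = δ_{(0,0)}/2 + δ_{(1,1)}/2` and `ν = δ_{(-1,1)}/4 + 3δ_{(1,0)}/4` in `ℝ²` that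
admits two distinct diffusive models. -/
theorem trim_plan_two_diffusive_models :
    letI X := Fin 4
    -- points: 0 ↦ (0,0), 1 ↦ (1,1), 2 ↦ (-1,1), 3 ↦ (1,0)
    letI ex : X → ℝ := ![0, 1, -1, 1]
    letI ey : X → ℝ := ![0, 1, 1, 0]
    letI c : X → X → ℝ := fun i j => Real.sqrt ((ex i - ex j) ^ 2 + (ey i - ey j) ^ 2)
    letI μ : X → ℝ := ![1/2, 1/2, 0, 0]
    letI ν : X → ℝ := ![0, 0, 1/4, 3/4]
    letI π : X → X → ℝ := fun i j =>
      if i = 0 ∧ j = 2 then 1/4 else if i = 0 ∧ j = 3 then 1/4 else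
        if i = 1 ∧ j = 3 then 1/2 else 0
    IsTrim c μ ν π ∧
      ∃ (μd₁ νd₁ : X → ℝ) (h₁₁ h₂₁ : X → X) (μd₂ νd₂ : X → ℝ) (h₁₂ h₂₂ : X → X),
        ((∀ x, 0 ≤ μd₁ x) ∧ (∀ y, 0 ≤ νd₁ y) ∧
          (∀ x, μd₁ x ≤ μ x) ∧ (∀ y, νd₁ y ≤ ν y) ∧
          (∀ x y, π x y = pushF h₁₁ μd₁ x y + pushB h₂₁ νd₁ x y)) ∧
        ((∀ x, 0 ≤ μd₂ x) ∧ (∀ y, 0 ≤ νd₂ y) ∧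
          (∀ x, μd₂ x ≤ μ x) ∧ (∀ y, νd₂ y ≤ ν y) ∧
          (∀ x y, π x y = pushF h₁₂ μd₂ x y + pushB h₂₂ νd₂ x y)) ∧
        (μd₁ ≠ μd₂ ∨ νd₁ ≠ νd₂) := by
  refine ⟨⟨pp_optimal, ?_⟩, ?_⟩
  · intro p hp
    show (spt pp).card ≤ (spt p).card
    rw [opt_unique p hp]
  · refine ⟨![1/4,1/2,0,0], ![0,0,0,1/4], ![2,3,0,0], fun _ => 0,
      ![1/4,1/2,0,0], ![0,0,1/4,0], ![3,3,0,0], fun _ => 0, ?_, ?_, ?_⟩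
    · refine ⟨?_, ?_, ?_, ?_, ?_⟩
      · intro x; fin_cases x <;> norm_num
      · intro y; fin_cases y <;> norm_num
      · intro x; fin_cases x <;> norm_num
      · intro y; fin_cases y <;> norm_num
      · intro x y; fin_cases x <;> fin_cases y <;> norm_num [pushF, pushB, Fin.ext_iff, fv0, fv1, fv2, fv3]
    · refine ⟨?_, ?_, ?_, ?_, ?_⟩
      · intro x; fin_cases x <;> norm_num
      · intro y; fin_cases y <;> norm_num
      · intro x; fin_cases x <;> norm_num
      · intro y; fin_cases y <;> norm_num
      · intro x y; fin_cases x <;> fin_cases y <;> norm_num [pushF, pushB, Fin.ext_iff, fv0, fv1, fv2, fv3]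
    · right
      intro h
      have := congrFun h 3
      norm_num [Matrix.cons_val_three] at this
end
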